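/- arXiv:0901.4383 — 3 statements merged into one kernel-verified Lean document; each statement's English description precedes it below -/
import Mathlib

section
/- For Cantor sets C₁, C₂ ⊂ ℝ (compact, perfect, totally disconnected, nonempty), if the thickness satisfies τ(C₁)·τ(C₂) > 1, and neither C₁ is contained in a gap (a bounded connected component of the complement, or an unbounded component) of C₂ nor C₂ is contained in a gap of C₁, then C₁ ∩ C₂ ≠ ∅. -/
open Set ENNReal

/-- A Cantor set in ℝ: nonempty, compact, perfect, totally disconnected. -/
def IsCantorSet (C : Set ℝ) : Prop :=
  C.Nonempty ∧ IsCompact C ∧ Perfect C ∧ IsTotallyDisconnected C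

/-- The convex hull of a compact set of reals. -/
noncomputable def cHull (C : Set ℝ) : Set ℝ := Set.Icc (sInf C) (sSup C)

/-- `U` is a gap of `C`: a connected component of (convex hull of C) \ C. -/
def IsGap (C U : Set ℝ) : Prop :=
  ∃ x ∈ cHull C \ C, U = connectedComponentIn (cHull C \ C) x

/-- A presentation of `C`: an ordering of the gaps of `C`. -/
def IsPresentation (C : Set ℝ) (U : ℕ → Set ℝ) : Prop :=
  (∀ n, IsGap C (U n)) ∧ Function.Injective U ∧ ∀ G, IsGap C G → ∃ n, U n = G

/-- The bridge `K`: the connected component of the hull minus the first `n+1` gaps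
containing the point `u`. -/
noncomputable def bridge (C : Set ℝ) (U : ℕ → Set ℝ) (n : ℕ) (u : ℝ) : Set ℝ :=
  connectedComponentIn (cHull C \ ⋃ i ∈ Finset.range (n + 1), U i) u

/-- The ratio τ(C, 𝒰, u) = |K|/|Uₙ|. -/
noncomputable def gapRatio (C : Set ℝ) (U : ℕ → Set ℝ) (n : ℕ) (u : ℝ) : ℝ≥0∞ :=
  ENNReal.ofReal (Metric.diam (bridge C U n u)) / ENNReal.ofReal (Metric.diam (U n))

/-- The thickness τ(C) = sup over presentations of inf over gap boundary points of the ratio. -/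
noncomputable def thickness (C : Set ℝ) : ℝ≥0∞ :=
  ⨆ (U : ℕ → Set ℝ) (_ : IsPresentation C U),
    ⨅ (n : ℕ) (u : ℝ) (_ : u ∈ frontier (U n) ∩ C), gapRatio C U n u

/-- The denseness θ(C) = inf over presentations of sup over gap boundary points of the ratio. -/
noncomputable def denseness (C : Set ℝ) : ℝ≥0∞ :=
  ⨅ (U : ℕ → Set ℝ) (_ : IsPresentation C U),
    ⨆ (n : ℕ) (u : ℝ) (_ : u ∈ frontier (U n) ∩ C), gapRatio C U n u

lemma hull_diff_eq {C : Set ℝ} (hC : IsCompact C) (hne : C.Nonempty) :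
    cHull C \ C = Ioo (sInf C) (sSup C) \ C := by
  have hi := hC.sInf_mem hne
  have hs := hC.sSup_mem hne
  ext x
  simp only [cHull, mem_diff, mem_Icc, mem_Ioo]
  constructor
  · rintro ⟨⟨h1, h2⟩, h3⟩
    refine ⟨⟨lt_of_le_of_ne h1 ?_, lt_of_le_of_ne h2 ?_⟩, h3⟩
    · rintro rfl; exact h3 hi
    · rintro rfl; exact h3 hs
  · rintro ⟨⟨h1, h2⟩, h3⟩
    exact ⟨⟨h1.le, h2.le⟩, h3⟩

lemma hull_diff_open {C : Set ℝ} (hC : IsCompact C) (hne : C.Nonempty) :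
    IsOpen (cHull C \ C) := by
  rw [hull_diff_eq hC hne]
  exact isOpen_Ioo.sdiff hC.isClosed

lemma subset_cHull {C : Set ℝ} (hC : IsCompact C) : C ⊆ cHull C :=
  fun _ hx => ⟨csInf_le hC.bddBelow hx, le_csSup hC.bddAbove hx⟩

/-- structure of gaps -/
lemma gap_struct {C U : Set ℝ} (hC : IsCompact C) (hne : C.Nonempty) (hU : IsGap C U) :
    ∃ a b : ℝ, a < b ∧ U = Ioo a b ∧ a ∈ C ∧ b ∈ C := by
  obtain ⟨x, hx, rfl⟩ := hU
  set O := cHull C \ C with hO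
  have hOopen : IsOpen O := hull_diff_open hC hne
  set U := connectedComponentIn O x with hUdef
  have hUO : U ⊆ O := connectedComponentIn_subset O x
  have hxU : x ∈ U := mem_connectedComponentIn hx
  have hUop : IsOpen U := hOopen.connectedComponentIn
  have hUpc : IsPreconnected U := isPreconnected_connectedComponentIn
  have hUhull : U ⊆ Icc (sInf C) (sSup C) := fun y hy => (hUO hy).1
  have hbdd : BddAbove U := BddAbove.mono hUhull (Metric.isBounded_Icc _ _).bddAbove
  have hbddb : BddBelow U := BddBelow.mono hUhull (Metric.isBounded_Icc _ _).bddBelow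
  have hUne : U.Nonempty := ⟨x, hxU⟩
  set a := sInf U with ha
  set b := sSup U with hb
  have haU : a ∉ U := by
    intro h
    obtain ⟨ε, hε, hball⟩ := Metric.isOpen_iff.1 hUop a h
    have hmem : a - ε/2 ∈ U := hball (by
      rw [Metric.mem_ball, Real.dist_eq, abs_of_nonpos (by linarith)]; linarith)
    have := csInf_le hbddb hmem
    rw [← ha] at this; linarith
  have hbU : b ∉ U := by
    intro h
    obtain ⟨ε, hε, hball⟩ := Metric.isOpen_iff.1 hUop b h
    have hmem : b + ε/2 ∈ U := hball (by
      rw [Metric.mem_ball, Real.dist_eq, abs_of_nonneg (by linarith)]; linarith)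
    have := le_csSup hbdd hmem
    rw [← hb] at this; linarith
  have hUIoo : U = Ioo a b := by
    apply Subset.antisymm
    · intro y hy
      have h1 : a ≤ y := csInf_le hbddb hy
      have h2 : y ≤ b := le_csSup hbdd hy
      refine ⟨lt_of_le_of_ne h1 ?_, lt_of_le_of_ne h2 ?_⟩
      · rintro rfl; exact haU hy
      · rintro rfl; exact hbU hy
    · intro y hy
      obtain ⟨p, hpU, hp⟩ := exists_lt_of_csInf_lt hUne hy.1
      obtain ⟨q, hqU, hq⟩ := exists_lt_of_lt_csSup hUne hy.2
      exact hUpc.Icc_subset hpU hqU ⟨hp.le, hq.le⟩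
  have hab : a < b := by
    obtain ⟨y, hy⟩ := hUne
    rw [hUIoo] at hy; exact hy.1.trans hy.2
  have haIcc : a ∈ Icc (sInf C) (sSup C) := by
    obtain ⟨y, hy⟩ := hUne
    refine ⟨le_csInf ⟨y, hy⟩ fun z hz => (hUhull hz).1, ?_⟩
    exact le_trans (csInf_le hbddb hy) (hUhull hy).2
  have hbIcc : b ∈ Icc (sInf C) (sSup C) := by
    obtain ⟨y, hy⟩ := hUne
    refine ⟨le_trans (hUhull hy).1 (le_csSup hbdd hy), ?_⟩
    exact csSup_le ⟨y, hy⟩ fun z hz => (hUhull hz).2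
  refine ⟨a, b, hab, hUIoo, ?_, ?_⟩
  · by_contra haC
    have haO : a ∈ O := ⟨haIcc, haC⟩
    have hsub : Ico a b ⊆ O := by
      intro z hz
      rcases eq_or_lt_of_le hz.1 with h | h
      · rwa [← h]
      · exact hUO (hUIoo ▸ (⟨h, hz.2⟩ : z ∈ Ioo a b))
    have : Ico a b ⊆ U := isPreconnected_Ico.subset_connectedComponentIn
      (by rw [hUIoo] at hxU; exact ⟨hxU.1.le, hxU.2⟩) hsub
    exact haU (this ⟨le_refl a, hab⟩)
  · by_contra hbC
    have hbO : b ∈ O := ⟨hbIcc, hbC⟩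
    have hsub : Ioc a b ⊆ O := by
      intro z hz
      rcases eq_or_lt_of_le hz.2 with h | h
      · rwa [h]
      · exact hUO (hUIoo ▸ (⟨hz.1, h⟩ : z ∈ Ioo a b))
    have : Ioc a b ⊆ U := isPreconnected_Ioc.subset_connectedComponentIn
      (by rw [hUIoo] at hxU; exact ⟨hxU.1, hxU.2.le⟩) hsub
    exact hbU (this ⟨hab, le_refl b⟩)

lemma gap_subset {C U : Set ℝ} (hU : IsGap C U) : U ⊆ cHull C \ C := by
  obtain ⟨x, hx, rfl⟩ := hU
  exact connectedComponentIn_subset _ _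

lemma gap_eq_or_disjoint {C U V : Set ℝ} (hU : IsGap C U) (hV : IsGap C V) :
    U = V ∨ Disjoint U V := by
  obtain ⟨x, hx, rfl⟩ := hU
  obtain ⟨y, hy, rfl⟩ := hV
  by_cases h : Disjoint (connectedComponentIn (cHull C \ C) x) (connectedComponentIn (cHull C \ C) y)
  · exact Or.inr h
  · left
    obtain ⟨z, hz1, hz2⟩ := Set.not_disjoint_iff.1 h
    rw [connectedComponentIn_eq hz1, connectedComponentIn_eq hz2]

lemma Ioo_inj {a b c d : ℝ} (hab : a < b) (h : Ioo a b = Ioo c d) : a = c ∧ b = d := by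
  have hcd : c < d := by
    obtain ⟨y, hy⟩ := nonempty_Ioo.2 hab
    rw [h] at hy; exact hy.1.trans hy.2
  constructor
  · rw [← csInf_Ioo hab, ← csInf_Ioo hcd, h]
  · rw [← csSup_Ioo hab, ← csSup_Ioo hcd, h]

lemma gap_endpoints {C : Set ℝ} (hC : IsCompact C) (hne : C.Nonempty) {U : Set ℝ}
    (hU : IsGap C U) {a b : ℝ} (hab : a < b) (hIoo : U = Ioo a b) : a ∈ C ∧ b ∈ C := by
  obtain ⟨a', b', hab', hIoo', ha', hb'⟩ := gap_struct hC hne hU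
  obtain ⟨h1, h2⟩ := Ioo_inj hab' (hIoo'.symm.trans hIoo)
  exact ⟨h1 ▸ ha', h2 ▸ hb'⟩

lemma mem_bridge_set {C : Set ℝ} (hC : IsCompact C) {𝒰 : ℕ → Set ℝ}
    (hpres : IsPresentation C 𝒰) (n : ℕ) {u : ℝ} (hu : u ∈ C) :
    u ∈ cHull C \ ⋃ i ∈ Finset.range (n + 1), 𝒰 i := by
  refine ⟨subset_cHull hC hu, ?_⟩
  simp only [mem_iUnion]
  rintro ⟨i, _, hui⟩
  exact (gap_subset (hpres.1 i) hui).2 hu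

lemma bridge_right {C : Set ℝ} (hC : IsCompact C) (hne : C.Nonempty) {𝒰 : ℕ → Set ℝ}
    (hpres : IsPresentation C 𝒰) {n : ℕ} {u₁ u₂ : ℝ} (hUn : 𝒰 n = Ioo u₁ u₂)
    (h12 : u₁ < u₂) (hu₂ : u₂ ∈ C) :
    bridge C 𝒰 n u₂ ⊆ Ici u₂ := by
  intro x hx
  by_contra hlt
  rw [mem_Ici] at hlt
  push_neg at hlt
  have hu₂B : u₂ ∈ bridge C 𝒰 n u₂ := mem_connectedComponentIn (mem_bridge_set hC hpres n hu₂)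
  have hIcc : Icc x u₂ ⊆ bridge C 𝒰 n u₂ :=
    isPreconnected_connectedComponentIn.Icc_subset hx hu₂B
  obtain ⟨z, hz1, hz2⟩ := exists_between (max_lt hlt h12)
  have hzB : z ∈ bridge C 𝒰 n u₂ := hIcc ⟨(le_max_left x u₁).trans hz1.le, hz2.le⟩
  have hzS := connectedComponentIn_subset _ _ hzB
  refine hzS.2 ?_
  simp only [mem_iUnion]
  exact ⟨n, by simp, by rw [hUn]; exact ⟨(le_max_right x u₁).trans_lt hz1, hz2⟩⟩

lemma bridge_left {C : Set ℝ} (hC : IsCompact C) (hne : C.Nonempty) {𝒰 : ℕ → Set ℝ}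
    (hpres : IsPresentation C 𝒰) {n : ℕ} {u₁ u₂ : ℝ} (hUn : 𝒰 n = Ioo u₁ u₂)
    (h12 : u₁ < u₂) (hu₁ : u₁ ∈ C) :
    bridge C 𝒰 n u₁ ⊆ Iic u₁ := by
  intro x hx
  by_contra hlt
  rw [mem_Iic] at hlt
  push_neg at hlt
  have hu₁B : u₁ ∈ bridge C 𝒰 n u₁ := mem_connectedComponentIn (mem_bridge_set hC hpres n hu₁)
  have hIcc : Icc u₁ x ⊆ bridge C 𝒰 n u₁ :=
    isPreconnected_connectedComponentIn.Icc_subset hu₁B hx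
  obtain ⟨z, hz1, hz2⟩ := exists_between (lt_min hlt h12 : u₁ < min x u₂)
  have hzB : z ∈ bridge C 𝒰 n u₁ := hIcc ⟨hz1.le, hz2.le.trans (min_le_left x u₂)⟩
  have hzS := connectedComponentIn_subset _ _ hzB
  refine hzS.2 ?_
  simp only [mem_iUnion]
  exact ⟨n, by simp, by rw [hUn]; exact ⟨hz1, hz2.trans_le (min_le_right x u₂)⟩⟩

/-- Linked gap pair: gap `𝒰 n` on the left, gap `𝒱 m` on the right, interleaved. -/
def LinkedLt (𝒰 𝒱 : ℕ → Set ℝ) (n m : ℕ) : Prop :=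
  ∃ u₁ u₂ v₁ v₂ : ℝ, 𝒰 n = Ioo u₁ u₂ ∧ 𝒱 m = Ioo v₁ v₂ ∧ u₁ < v₁ ∧ v₁ < u₂ ∧ u₂ < v₂

lemma linked_step {K L : Set ℝ} (hK : IsCompact K) (hKne : K.Nonempty)
    (hL : IsCompact L) (hLne : L.Nonempty) (hdisj : ∀ x, x ∈ K → x ∉ L)
    {𝒰 𝒱 : ℕ → Set ℝ} (hU : IsPresentation K 𝒰) (hV : IsPresentation L 𝒱)
    {t₁ t₂ : ℝ≥0∞}
    (ht₁ : ∀ n u, u ∈ frontier (𝒰 n) ∩ K → t₁ ≤ gapRatio K 𝒰 n u)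
    (ht₂ : ∀ m v, v ∈ frontier (𝒱 m) ∩ L → t₂ ≤ gapRatio L 𝒱 m v)
    (hτ : 1 < t₁ * t₂) {n m : ℕ} (hlink : LinkedLt 𝒰 𝒱 n m) :
    ∃ p q, LinkedLt 𝒱 𝒰 p q ∧ n + m < p + q := by
  obtain ⟨u₁, u₂, v₁, v₂, hUn, hVm, h1, h2, h3⟩ := hlink
  have h12u : u₁ < u₂ := h1.trans h2
  have h12v : v₁ < v₂ := h2.trans h3
  obtain ⟨hu₁K, hu₂K⟩ := gap_endpoints hK hKne (hU.1 n) h12u hUn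
  obtain ⟨hv₁L, hv₂L⟩ := gap_endpoints hL hLne (hV.1 m) h12v hVm
  have hu₂B : u₂ ∈ bridge K 𝒰 n u₂ :=
    mem_connectedComponentIn (mem_bridge_set hK hU n hu₂K)
  by_cases hcase1 : ∃ x ∈ bridge K 𝒰 n u₂, v₂ ≤ x
  · -- the K-bridge reaches past v₂ : find a later gap of K containing v₂
    obtain ⟨x, hxB, hxv⟩ := hcase1
    have hv₂B : v₂ ∈ bridge K 𝒰 n u₂ :=
      isPreconnected_connectedComponentIn.Icc_subset hu₂B hxB ⟨h3.le, hxv⟩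
    have hv₂S := connectedComponentIn_subset _ _ hv₂B
    have hv₂K : v₂ ∉ K := fun h => hdisj v₂ h hv₂L
    have hv₂O : v₂ ∈ cHull K \ K := ⟨hv₂S.1, hv₂K⟩
    have hgap : IsGap K (connectedComponentIn (cHull K \ K) v₂) := ⟨v₂, hv₂O, rfl⟩
    obtain ⟨p, hp⟩ := hU.2.2 _ hgap
    obtain ⟨a₁, a₂, ha12, haIoo, ha₁K, ha₂K⟩ := gap_struct hK hKne hgap
    have hv₂U' : v₂ ∈ Ioo a₁ a₂ := haIoo ▸ mem_connectedComponentIn hv₂O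
    have hpn : n < p := by
      rcases lt_or_ge n p with h | h
      · exact h
      · exfalso
        refine hv₂S.2 ?_
        simp only [mem_iUnion]
        exact ⟨p, by simp [Finset.mem_range]; omega, by rw [hp]; exact haIoo ▸ hv₂U'⟩
    have hu₂a₁ : u₂ ≤ a₁ := by
      by_contra hc
      push_neg at hc
      have : u₂ ∈ Ioo a₁ a₂ := ⟨hc, h3.trans hv₂U'.2⟩
      exact (gap_subset hgap (haIoo ▸ this)).2 hu₂K
    refine ⟨m, p, ⟨v₁, v₂, a₁, a₂, hVm, by rw [hp]; exact haIoo, ?_, hv₂U'.1, hv₂U'.2⟩, by omega⟩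
    exact h2.trans_le hu₂a₁
  · push_neg at hcase1
    -- the K-bridge is inside V : thickness estimate
    have hBsub : bridge K 𝒰 n u₂ ⊆ Icc u₂ v₂ := fun x hx =>
      ⟨bridge_right hK hKne hU hUn h12u hu₂K hx, (hcase1 x hx).le⟩
    have hdB : Metric.diam (bridge K 𝒰 n u₂) ≤ v₂ - u₂ :=
      le_of_le_of_eq (Metric.diam_mono hBsub (Metric.isBounded_Icc _ _))
        (Real.diam_Icc (by linarith))
    have hq := ht₁ n u₂ ⟨by rw [hUn, frontier_Ioo h12u]; exact Or.inr rfl, hu₂K⟩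
    rw [gapRatio, hUn, Real.diam_Ioo h12u.le] at hq
    have hne0 : ENNReal.ofReal (u₂ - u₁) ≠ 0 := by
      simp [ENNReal.ofReal_eq_zero]; linarith
    have hmul1 : t₁ * ENNReal.ofReal (u₂ - u₁) ≤ ENNReal.ofReal (v₂ - v₁) := by
      have := (ENNReal.le_div_iff_mul_le (Or.inl hne0) (Or.inl ENNReal.ofReal_ne_top)).1 hq
      exact this.trans (ENNReal.ofReal_le_ofReal (hdB.trans (by linarith)))
    -- now the L-bridge at v₁, leftwards
    have hv₁B : v₁ ∈ bridge L 𝒱 m v₁ :=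
      mem_connectedComponentIn (mem_bridge_set hL hV m hv₁L)
    by_cases hcase2 : ∃ x ∈ bridge L 𝒱 m v₁, x ≤ u₁
    · obtain ⟨x, hxB, hxu⟩ := hcase2
      have hu₁B : u₁ ∈ bridge L 𝒱 m v₁ :=
        isPreconnected_connectedComponentIn.Icc_subset hxB hv₁B ⟨hxu, h1.le⟩
      have hu₁S := connectedComponentIn_subset _ _ hu₁B
      have hu₁L : u₁ ∉ L := fun h => hdisj u₁ hu₁K h
      have hu₁O : u₁ ∈ cHull L \ L := ⟨hu₁S.1, hu₁L⟩
      have hgap : IsGap L (connectedComponentIn (cHull L \ L) u₁) := ⟨u₁, hu₁O, rfl⟩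
      obtain ⟨q, hqe⟩ := hV.2.2 _ hgap
      obtain ⟨b₁, b₂, hb12, hbIoo, hb₁L, hb₂L⟩ := gap_struct hL hLne hgap
      have hu₁V' : u₁ ∈ Ioo b₁ b₂ := hbIoo ▸ mem_connectedComponentIn hu₁O
      have hqm : m < q := by
        rcases lt_or_ge m q with h | h
        · exact h
        · exfalso
          refine hu₁S.2 ?_
          simp only [mem_iUnion]
          exact ⟨q, by simp [Finset.mem_range]; omega, by rw [hqe]; exact hbIoo ▸ hu₁V'⟩
      have hb₂v₁ : b₂ ≤ v₁ := by
        by_contra hc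
        push_neg at hc
        have : v₁ ∈ Ioo b₁ b₂ := ⟨hu₁V'.1.trans h1, hc⟩
        exact (gap_subset hgap (hbIoo ▸ this)).2 hv₁L
      exact ⟨q, n, ⟨b₁, b₂, u₁, u₂, by rw [hqe]; exact hbIoo, hUn, hu₁V'.1, hu₁V'.2,
        hb₂v₁.trans_lt h2⟩, by omega⟩
    · push_neg at hcase2
      exfalso
      have hBsub' : bridge L 𝒱 m v₁ ⊆ Icc u₁ v₁ := fun x hx =>
        ⟨(hcase2 x hx).le, bridge_left hL hLne hV hVm h12v hv₁L hx⟩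
      have hdB' : Metric.diam (bridge L 𝒱 m v₁) ≤ v₁ - u₁ :=
        le_of_le_of_eq (Metric.diam_mono hBsub' (Metric.isBounded_Icc _ _))
          (Real.diam_Icc (by linarith))
      have hq' := ht₂ m v₁ ⟨by rw [hVm, frontier_Ioo h12v]; exact Or.inl rfl, hv₁L⟩
      rw [gapRatio, hVm, Real.diam_Ioo h12v.le] at hq'
      have hne0' : ENNReal.ofReal (v₂ - v₁) ≠ 0 := by
        simp [ENNReal.ofReal_eq_zero]; linarith
      have hmul2 : t₂ * ENNReal.ofReal (v₂ - v₁) ≤ ENNReal.ofReal (u₂ - u₁) := by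
        have := (ENNReal.le_div_iff_mul_le (Or.inl hne0') (Or.inl ENNReal.ofReal_ne_top)).1 hq'
        exact this.trans (ENNReal.ofReal_le_ofReal (hdB'.trans (by linarith)))
      have hprod : (t₁ * t₂) * (ENNReal.ofReal (u₂ - u₁) * ENNReal.ofReal (v₂ - v₁)) ≤
          1 * (ENNReal.ofReal (u₂ - u₁) * ENNReal.ofReal (v₂ - v₁)) := by
        calc (t₁ * t₂) * (ENNReal.ofReal (u₂ - u₁) * ENNReal.ofReal (v₂ - v₁))
            = (t₁ * ENNReal.ofReal (u₂ - u₁)) * (t₂ * ENNReal.ofReal (v₂ - v₁)) := by ring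
          _ ≤ ENNReal.ofReal (v₂ - v₁) * ENNReal.ofReal (u₂ - u₁) :=
              mul_le_mul' hmul1 hmul2
          _ = 1 * (ENNReal.ofReal (u₂ - u₁) * ENNReal.ofReal (v₂ - v₁)) := by ring
      have hc : ENNReal.ofReal (u₂ - u₁) * ENNReal.ofReal (v₂ - v₁) ≠ 0 :=
        mul_ne_zero hne0 hne0'
      have hct : ENNReal.ofReal (u₂ - u₁) * ENNReal.ofReal (v₂ - v₁) ≠ ⊤ :=
        ENNReal.mul_ne_top ENNReal.ofReal_ne_top ENNReal.ofReal_ne_top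
      have := (ENNReal.mul_le_mul_iff_left hc hct).1 hprod
      exact absurd hτ (not_lt.2 this)

lemma gaps_separated {C U V : Set ℝ} (hU : IsGap C U) (hV : IsGap C V) (hUV : U ≠ V)
    {a b a' b' : ℝ} (hab : a < b) (hab' : a' < b') (hUe : U = Ioo a b) (hVe : V = Ioo a' b')
    (haa' : a ≤ a') : b ≤ a' := by
  rcases gap_eq_or_disjoint hU hV with h | h
  · exact absurd h hUV
  by_contra hc
  push_neg at hc
  obtain ⟨z, hz1, hz2⟩ := exists_between (lt_min hc hab' : a' < min b b')
  have hzU : z ∈ U := by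
    rw [hUe]; exact ⟨haa'.trans_lt hz1, hz2.trans_le (min_le_left _ _)⟩
  have hzV : z ∈ V := by
    rw [hVe]; exact ⟨hz1, hz2.trans_le (min_le_right _ _)⟩
  exact Set.disjoint_left.1 h hzU hzV

lemma finite_big_gaps {C : Set ℝ} (hC : IsCompact C) (hne : C.Nonempty) {𝒰 : ℕ → Set ℝ}
    (hpres : IsPresentation C 𝒰) {d : ℝ} (hd : 0 < d) :
    {n : ℕ | d ≤ Metric.diam (𝒰 n)}.Finite := by
  set A := {n : ℕ | d ≤ Metric.diam (𝒰 n)} with hA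
  set f : ℕ → ℤ := fun n => ⌊sInf (𝒰 n) / d⌋ with hf
  have key : ∀ n ∈ A, ∀ n' ∈ A, n ≠ n' → sInf (𝒰 n) ≤ sInf (𝒰 n') →
      sInf (𝒰 n) + d ≤ sInf (𝒰 n') := by
    intro n hn n' hn' hne' hle
    obtain ⟨a, b, hab, hIoo, haC, hbC⟩ := gap_struct hC hne (hpres.1 n)
    obtain ⟨a', b', hab', hIoo', haC', hbC'⟩ := gap_struct hC hne (hpres.1 n')
    have hia : sInf (𝒰 n) = a := by rw [hIoo, csInf_Ioo hab]
    have hia' : sInf (𝒰 n') = a' := by rw [hIoo', csInf_Ioo hab']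
    have hdiam : d ≤ b - a := by
      have h2 := hn
      rw [hA, mem_setOf_eq, hIoo, Real.diam_Ioo hab.le] at h2
      exact h2
    have hUV : 𝒰 n ≠ 𝒰 n' := fun h => hne' (hpres.2.1 h)
    have hsep := gaps_separated (hpres.1 n) (hpres.1 n') hUV hab hab' hIoo hIoo'
      (by rw [hia, hia'] at hle; exact hle)
    rw [hia, hia']
    linarith
  have hinj : Set.InjOn f A := by
    intro n hn n' hn' hfe
    by_contra hne'
    have habs : |sInf (𝒰 n') / d - sInf (𝒰 n) / d| < 1 :=
      Int.abs_sub_lt_one_of_floor_eq_floor hfe.symm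
    rw [← sub_div, abs_div, abs_of_pos hd, div_lt_one hd] at habs
    rcases le_total (sInf (𝒰 n)) (sInf (𝒰 n')) with h | h
    · have := key n hn n' hn' hne' h
      rw [abs_of_nonneg (by linarith)] at habs
      linarith
    · have := key n' hn' n hn (Ne.symm hne') h
      rw [abs_of_nonpos (by linarith)] at habs
      linarith
  have himg : f '' A ⊆ Set.Icc ⌊sInf C / d⌋ ⌊sSup C / d⌋ := by
    rintro _ ⟨n, hn, rfl⟩
    obtain ⟨a, b, hab, hIoo, haC, hbC⟩ := gap_struct hC hne (hpres.1 n)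
    have hia : sInf (𝒰 n) = a := by rw [hIoo, csInf_Ioo hab]
    constructor
    · exact Int.floor_mono ((div_le_div_iff_of_pos_right hd).2 (hia ▸ csInf_le hC.bddBelow haC))
    · exact Int.floor_mono ((div_le_div_iff_of_pos_right hd).2 (hia ▸ le_csSup hC.bddAbove haC))
  exact Set.Finite.of_finite_image ((Set.finite_Icc _ _).subset himg) hinj

lemma linked_finite {K L : Set ℝ} (hK : IsCompact K) (hKne : K.Nonempty)
    (hL : IsCompact L) (hLne : L.Nonempty)
    {𝒰 𝒱 : ℕ → Set ℝ} (hU : IsPresentation K 𝒰) (hV : IsPresentation L 𝒱)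
    {d : ℝ} (hd : 0 < d) (hsep : ∀ x ∈ K, ∀ y ∈ L, d ≤ |x - y|) :
    {p : ℕ × ℕ | LinkedLt 𝒰 𝒱 p.1 p.2}.Finite := by
  apply Set.Finite.subset (Set.Finite.prod (finite_big_gaps hK hKne hU hd)
    (finite_big_gaps hL hLne hV hd))
  rintro ⟨n, m⟩ ⟨u₁, u₂, v₁, v₂, hUn, hVm, h1, h2, h3⟩
  have h12u : u₁ < u₂ := h1.trans h2
  have h12v : v₁ < v₂ := h2.trans h3
  obtain ⟨hu₁K, hu₂K⟩ := gap_endpoints hK hKne (hU.1 n) h12u hUn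
  obtain ⟨hv₁L, hv₂L⟩ := gap_endpoints hL hLne (hV.1 m) h12v hVm
  have hd1 : d ≤ v₁ - u₁ := by
    have := hsep u₁ hu₁K v₁ hv₁L
    rwa [abs_of_nonpos (by linarith), neg_sub] at this
  have hd2 : d ≤ v₂ - u₂ := by
    have := hsep u₂ hu₂K v₂ hv₂L
    rwa [abs_of_nonpos (by linarith), neg_sub] at this
  constructor
  · show d ≤ Metric.diam (𝒰 n)
    rw [hUn, Real.diam_Ioo h12u.le]; linarith
  · show d ≤ Metric.diam (𝒱 m)
    rw [hVm, Real.diam_Ioo h12v.le]; linarith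

lemma exists_linked {K L : Set ℝ} (hK : IsCompact K) (hKne : K.Nonempty)
    (hL : IsCompact L) (hLne : L.Nonempty) (hdisj : ∀ x ∈ K, x ∉ L)
    (hgK : ¬ ∃ x ∈ Lᶜ, K ⊆ connectedComponentIn Lᶜ x)
    (hgL : ¬ ∃ x ∈ Kᶜ, L ⊆ connectedComponentIn Kᶜ x)
    {𝒰 𝒱 : ℕ → Set ℝ} (hU : IsPresentation K 𝒰) (hV : IsPresentation L 𝒱) :
    ∃ n m, LinkedLt 𝒰 𝒱 n m ∨ LinkedLt 𝒱 𝒰 m n := by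
  obtain ⟨k₀, hk₀⟩ := id hKne
  have hk₀L : k₀ ∈ Lᶜ := hdisj k₀ hk₀
  have hns : ¬ K ⊆ connectedComponentIn Lᶜ k₀ := fun h => hgK ⟨k₀, hk₀L, h⟩
  obtain ⟨k₁, hk₁, hk₁c⟩ := not_subset.1 hns
  have hlex : ∃ l ∈ L, min k₀ k₁ < l ∧ l < max k₀ k₁ := by
    by_contra hc
    push_neg at hc
    have hsub : Icc (min k₀ k₁) (max k₀ k₁) ⊆ Lᶜ := by
      intro z hz hzL
      have hz0 : z ≠ k₀ := fun h => hdisj k₀ hk₀ (h ▸ hzL)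
      have hz1 : z ≠ k₁ := fun h => hdisj k₁ hk₁ (h ▸ hzL)
      have hmin : min k₀ k₁ < z := by
        refine lt_of_le_of_ne hz.1 ?_
        rcases min_choice k₀ k₁ with h | h <;> rw [h]
        · exact fun he => hz0 he.symm
        · exact fun he => hz1 he.symm
      have hmax : z < max k₀ k₁ := by
        refine lt_of_le_of_ne hz.2 ?_
        rcases max_choice k₀ k₁ with h | h <;> rw [h]
        · exact hz0
        · exact hz1
      exact absurd (hc z hzL hmin) (not_le.2 hmax)
    have hk₀mem : k₀ ∈ Icc (min k₀ k₁) (max k₀ k₁) := ⟨min_le_left _ _, le_max_left _ _⟩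
    have := isPreconnected_Icc.subset_connectedComponentIn hk₀mem hsub
    exact hk₁c (this ⟨min_le_right _ _, le_max_right _ _⟩)
  obtain ⟨l, hlL, hl1, hl2⟩ := hlex
  have hlK : l ∉ K := fun h => hdisj l h hlL
  have hlhull : l ∈ cHull K := by
    constructor
    · exact le_trans (csInf_le hK.bddBelow (by rcases min_choice k₀ k₁ with h | h <;>
        rw [h] <;> assumption)) hl1.le
    · exact le_trans hl2.le (le_csSup hK.bddAbove (by rcases max_choice k₀ k₁ with h | h <;>
        rw [h] <;> assumption))
  have hlO : l ∈ cHull K \ K := ⟨hlhull, hlK⟩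
  have hgapU : IsGap K (connectedComponentIn (cHull K \ K) l) := ⟨l, hlO, rfl⟩
  obtain ⟨n, hn⟩ := hU.2.2 _ hgapU
  obtain ⟨u₁, u₂, h12u, hIoo, hu₁K, hu₂K⟩ := gap_struct hK hKne hgapU
  have hlU : l ∈ Ioo u₁ u₂ := hIoo ▸ mem_connectedComponentIn hlO
  by_cases hcase : u₂ ≤ sSup L
  · -- the right endpoint u₂ falls in the hull of L : gap of L around u₂
    have hu₂L : u₂ ∉ L := fun h => hdisj u₂ hu₂K h
    have hu₂hull : u₂ ∈ cHull L :=
      ⟨(csInf_le hL.bddBelow hlL).trans hlU.2.le, hcase⟩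
    have hu₂O : u₂ ∈ cHull L \ L := ⟨hu₂hull, hu₂L⟩
    have hgapV : IsGap L (connectedComponentIn (cHull L \ L) u₂) := ⟨u₂, hu₂O, rfl⟩
    obtain ⟨m, hm⟩ := hV.2.2 _ hgapV
    obtain ⟨v₁, v₂, h12v, hIoo', hv₁L, hv₂L⟩ := gap_struct hL hLne hgapV
    have hu₂V : u₂ ∈ Ioo v₁ v₂ := hIoo' ▸ mem_connectedComponentIn hu₂O
    have hlv₁ : l ≤ v₁ := by
      by_contra hcc
      push_neg at hcc
      exact (gap_subset hgapV (hIoo' ▸ (⟨hcc, hlU.2.trans hu₂V.2⟩ : l ∈ Ioo v₁ v₂))).2 hlL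
    exact ⟨n, m, Or.inl ⟨u₁, u₂, v₁, v₂, by rw [hn]; exact hIoo, by rw [hm]; exact hIoo',
      hlU.1.trans_le hlv₁, hu₂V.1, hu₂V.2⟩⟩
  · push_neg at hcase
    by_cases hcase2 : sInf L ≤ u₁
    · -- the left endpoint u₁ falls in the hull of L
      have hu₁L : u₁ ∉ L := fun h => hdisj u₁ hu₁K h
      have hu₁hull : u₁ ∈ cHull L :=
        ⟨hcase2, hlU.1.le.trans (le_csSup hL.bddAbove hlL)⟩
      have hu₁O : u₁ ∈ cHull L \ L := ⟨hu₁hull, hu₁L⟩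
      have hgapV : IsGap L (connectedComponentIn (cHull L \ L) u₁) := ⟨u₁, hu₁O, rfl⟩
      obtain ⟨m, hm⟩ := hV.2.2 _ hgapV
      obtain ⟨v₁, v₂, h12v, hIoo', hv₁L, hv₂L⟩ := gap_struct hL hLne hgapV
      have hu₁V : u₁ ∈ Ioo v₁ v₂ := hIoo' ▸ mem_connectedComponentIn hu₁O
      have hv₂l : v₂ ≤ l := by
        by_contra hcc
        push_neg at hcc
        exact (gap_subset hgapV (hIoo' ▸ (⟨hu₁V.1.trans hlU.1, hcc⟩ : l ∈ Ioo v₁ v₂))).2 hlL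
      exact ⟨n, m, Or.inr ⟨v₁, v₂, u₁, u₂, by rw [hm]; exact hIoo', by rw [hn]; exact hIoo,
        hu₁V.1, hu₁V.2, hv₂l.trans_lt hlU.2⟩⟩
    · -- L is entirely inside the gap of K : contradiction with hgL
      push_neg at hcase2
      exfalso
      have hLsub : L ⊆ Ioo u₁ u₂ := by
        intro z hz
        exact ⟨hcase2.trans_le (csInf_le hL.bddBelow hz),
          (le_csSup hL.bddAbove hz).trans_lt hcase⟩
      have hIooKc : Ioo u₁ u₂ ⊆ Kᶜ := by
        intro z hz
        exact (gap_subset hgapU (hIoo ▸ hz)).2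
      have hcomp : Ioo u₁ u₂ ⊆ connectedComponentIn Kᶜ l :=
        isPreconnected_Ioo.subset_connectedComponentIn hlU hIooKc
      exact hgL ⟨l, hlK, hLsub.trans hcomp⟩

/-- Newhouse's Gap Lemma: if τ(C₁)·τ(C₂) > 1 and neither Cantor set is contained in a
gap (a connected component of the complement, bounded or unbounded) of the other,
then they intersect. -/
theorem gap_lemma (C₁ C₂ : Set ℝ) (h₁ : IsCantorSet C₁) (h₂ : IsCantorSet C₂)
    (hτ : 1 < thickness C₁ * thickness C₂)
    (hg₁ : ¬ ∃ x ∈ C₂ᶜ, C₁ ⊆ connectedComponentIn C₂ᶜ x)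
    (hg₂ : ¬ ∃ x ∈ C₁ᶜ, C₂ ⊆ connectedComponentIn C₁ᶜ x) :
    (C₁ ∩ C₂).Nonempty := by
  obtain ⟨hKne, hK, -, -⟩ := h₁
  obtain ⟨hLne, hL, -, -⟩ := h₂
  by_contra hcon
  have hdisj : ∀ x ∈ C₁, x ∉ C₂ := fun x hx hy => hcon ⟨x, hx, hy⟩
  have hdisj' : ∀ x ∈ C₂, x ∉ C₁ := fun x hx hy => hdisj _ hy hx
  -- a positive separation distance
  obtain ⟨d, hd, hsep⟩ : ∃ d > 0, ∀ x ∈ C₁, ∀ y ∈ C₂, d ≤ |x - y| := by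
    obtain ⟨x₀, hx₀⟩ := hKne
    obtain ⟨y₀, hy₀⟩ := hLne
    obtain ⟨⟨a₀, b₀⟩, hab₀, hmin⟩ := (hK.prod hL).exists_isMinOn
      ⟨(x₀, y₀), mk_mem_prod hx₀ hy₀⟩
      ((continuous_fst.sub continuous_snd).abs.continuousOn)
    refine ⟨|a₀ - b₀|, abs_pos.2 (sub_ne_zero.2 fun h => hdisj a₀ hab₀.1 (h ▸ hab₀.2)), ?_⟩
    intro x hx y hy
    exact hmin (mk_mem_prod hx hy)
  have hsep' : ∀ x ∈ C₂, ∀ y ∈ C₁, d ≤ |x - y| := by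
    intro x hx y hy
    rw [abs_sub_comm]
    exact hsep y hy x hx
  -- extract presentations witnessing the thickness bound
  rw [thickness, thickness] at hτ
  simp_rw [ENNReal.iSup_mul, ENNReal.mul_iSup, lt_iSup_iff] at hτ
  obtain ⟨𝒰, hUp, 𝒱, hVp, hτ'⟩ := hτ
  set t₁ := ⨅ (n : ℕ) (u : ℝ) (_ : u ∈ frontier (𝒰 n) ∩ C₁), gapRatio C₁ 𝒰 n u with ht₁def
  set t₂ := ⨅ (n : ℕ) (u : ℝ) (_ : u ∈ frontier (𝒱 n) ∩ C₂), gapRatio C₂ 𝒱 n u with ht₂def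
  have ht₁ : ∀ n u, u ∈ frontier (𝒰 n) ∩ C₁ → t₁ ≤ gapRatio C₁ 𝒰 n u := by
    intro n u hu
    exact iInf_le_of_le n (iInf_le_of_le u (iInf_le _ hu))
  have ht₂ : ∀ n u, u ∈ frontier (𝒱 n) ∩ C₂ → t₂ ≤ gapRatio C₂ 𝒱 n u := by
    intro n u hu
    exact iInf_le_of_le n (iInf_le_of_le u (iInf_le _ hu))
  have hτ'' : 1 < t₂ * t₁ := by rwa [mul_comm]
  -- finite set of linked pairs
  have hPfin : {p : ℕ × ℕ | LinkedLt 𝒰 𝒱 p.1 p.2}.Finite :=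
    linked_finite hK hKne hL hLne hUp hVp hd hsep
  have hQfin : {p : ℕ × ℕ | LinkedLt 𝒱 𝒰 p.1 p.2}.Finite :=
    linked_finite hL hLne hK hKne hVp hUp hd hsep'
  set T : Set ℕ := (fun p : ℕ × ℕ => p.1 + p.2) ''
    ({p : ℕ × ℕ | LinkedLt 𝒰 𝒱 p.1 p.2} ∪ {p : ℕ × ℕ | LinkedLt 𝒱 𝒰 p.1 p.2}) with hTdef
  have hTfin : T.Finite := Set.Finite.image _ (hPfin.union hQfin)
  have hTne : T.Nonempty := by
    obtain ⟨n, m, h | h⟩ := exists_linked hK hKne hL hLne hdisj hg₁ hg₂ hUp hVp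
    · exact ⟨n + m, ⟨(n, m), Or.inl h, rfl⟩⟩
    · exact ⟨m + n, ⟨(m, n), Or.inr h, rfl⟩⟩
  obtain ⟨s₀, hs₀T, hs₀max⟩ := Set.Finite.exists_maximalFor id T hTfin hTne
  obtain ⟨⟨n, m⟩, hpair, hsum⟩ := hs₀T
  have hsum' : n + m = s₀ := hsum
  rcases hpair with hpair | hpair
  · obtain ⟨p, q, hnew, hlt⟩ := linked_step hK hKne hL hLne hdisj hUp hVp ht₁ ht₂ hτ' hpair
    have hmem : p + q ∈ T := ⟨(p, q), Or.inr hnew, rfl⟩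
    have := hs₀max hmem (by simp only [id_eq]; omega)
    simp only [id_eq] at this
    omega
  · obtain ⟨p, q, hnew, hlt⟩ := linked_step hL hLne hK hKne hdisj' hVp hUp ht₂ ht₁ hτ'' hpair
    have hmem : p + q ∈ T := ⟨(p, q), Or.inl hnew, rfl⟩
    have := hs₀max hmem (by simp only [id_eq]; omega)
    simp only [id_eq] at this
    omega
end

section
/- If C ⊂ ℝ is a Cantor set with thickness τ(C), then its Hausdorff dimension satisfies dim_H C ≥ log 2 / log(2 + 1/τ(C)). -/
open Set ENNReal

namespace ThickAux

/-- left endpoint of the n-th gap -/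
noncomputable def glo (Uu : ℕ → Set ℝ) (i : ℕ) : ℝ := sInf (Uu i)

/-- right endpoint of the n-th gap -/
noncomputable def ghi (Uu : ℕ → Set ℝ) (i : ℕ) : ℝ := sSup (Uu i)

/-- the context for the main covering argument -/
structure Ctx (C : Set ℝ) (Uu : ℕ → Set ℝ) (t s : ℝ) : Prop where
  hne : C.Nonempty
  hcomp : IsCompact C
  hperf : Perfect C
  hpres : IsPresentation C Uu
  ht : 0 < t
  hth : ∀ n, ∀ u ∈ frontier (Uu n) ∩ C, ENNReal.ofReal t < gapRatio C Uu n u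
  hs : 0 < s
  hs1 : s < 1
  hst : (2 + 1/t) ^ s ≤ (2:ℝ)

namespace Ctx

variable {C : Set ℝ} {Uu : ℕ → Set ℝ} {t s : ℝ} (hc : Ctx C Uu t s)

include hc

theorem hclosed : IsClosed C := hc.hperf.closed

theorem alpha_mem : sInf C ∈ C := hc.hcomp.sInf_mem hc.hne

theorem beta_mem : sSup C ∈ C := hc.hcomp.sSup_mem hc.hne

theorem bddBelowC : BddBelow C := hc.hcomp.isBounded.bddBelow

theorem bddAboveC : BddAbove C := hc.hcomp.isBounded.bddAbove

theorem alpha_le {x : ℝ} (hx : x ∈ C) : sInf C ≤ x := csInf_le hc.bddBelowC hx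

theorem le_beta {x : ℝ} (hx : x ∈ C) : x ≤ sSup C := le_csSup hc.bddAboveC hx

theorem subset_Icc : C ⊆ Icc (sInf C) (sSup C) := fun _ hx => ⟨hc.alpha_le hx, hc.le_beta hx⟩

theorem compl_eq : cHull C \ C = Ioo (sInf C) (sSup C) ∩ Cᶜ := by
  ext x
  constructor
  · rintro ⟨hx1, hx2⟩
    refine ⟨⟨lt_of_le_of_ne hx1.1 ?_, lt_of_le_of_ne hx1.2 ?_⟩, hx2⟩
    · rintro rfl; exact hx2 hc.alpha_mem
    · rintro rfl; exact hx2 hc.beta_mem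
  · rintro ⟨hx1, hx2⟩
    exact ⟨⟨hx1.1.le, hx1.2.le⟩, hx2⟩

theorem compl_open : IsOpen (cHull C \ C) := by
  rw [hc.compl_eq]
  exact isOpen_Ioo.inter hc.hclosed.isOpen_compl

theorem gap_spec (n : ℕ) : ∃ x ∈ cHull C \ C, Uu n = connectedComponentIn (cHull C \ C) x :=
  hc.hpres.1 n

theorem gap_sub (n : ℕ) : Uu n ⊆ cHull C \ C := by
  obtain ⟨x, hx, h⟩ := hc.gap_spec n
  rw [h]; exact connectedComponentIn_subset _ _

theorem gap_open (n : ℕ) : IsOpen (Uu n) := by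
  obtain ⟨x, hx, h⟩ := hc.gap_spec n
  rw [h]; exact hc.compl_open.connectedComponentIn

theorem gap_nonempty (n : ℕ) : (Uu n).Nonempty := by
  obtain ⟨x, hx, h⟩ := hc.gap_spec n
  exact ⟨x, h ▸ mem_connectedComponentIn hx⟩

theorem gap_preconn (n : ℕ) : IsPreconnected (Uu n) := by
  obtain ⟨x, hx, h⟩ := hc.gap_spec n
  rw [h]; exact isPreconnected_connectedComponentIn

theorem gap_disjoint_C {n : ℕ} {x : ℝ} (hx : x ∈ Uu n) : x ∉ C := (hc.gap_sub n hx).2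

theorem gap_sub_Ioo (n : ℕ) : Uu n ⊆ Ioo (sInf C) (sSup C) := by
  intro x hx
  have := hc.gap_sub n hx
  rw [hc.compl_eq] at this
  exact this.1

theorem gap_bddBelow (n : ℕ) : BddBelow (Uu n) := bddBelow_Ioo.mono (hc.gap_sub_Ioo n)

theorem gap_bddAbove (n : ℕ) : BddAbove (Uu n) := bddAbove_Ioo.mono (hc.gap_sub_Ioo n)

theorem glo_lt_ghi (n : ℕ) : glo Uu n < ghi Uu n := by
  obtain ⟨x, hx⟩ := hc.gap_nonempty n
  obtain ⟨ε, hε, hball⟩ := Metric.isOpen_iff.mp (hc.gap_open n) x hx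
  have h2 : x + ε/2 ∈ Uu n := by
    apply hball
    rw [Metric.mem_ball, Real.dist_eq]
    rw [abs_of_pos (by linarith)]
    linarith
  calc glo Uu n ≤ x := csInf_le (hc.gap_bddBelow n) hx
    _ < x + ε/2 := by linarith
    _ ≤ ghi Uu n := le_csSup (hc.gap_bddAbove n) h2

theorem Ioo_sub_gap (n : ℕ) : Ioo (glo Uu n) (ghi Uu n) ⊆ Uu n := by
  intro y hy
  obtain ⟨u, hu, hu2⟩ := exists_lt_of_csInf_lt (hc.gap_nonempty n) hy.1
  obtain ⟨v, hv, hv2⟩ := exists_lt_of_lt_csSup (hc.gap_nonempty n) hy.2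
  exact (hc.gap_preconn n).Icc_subset hu hv ⟨hu2.le, hv2.le⟩

theorem glo_not_mem (n : ℕ) : glo Uu n ∉ Uu n := by
  intro h
  obtain ⟨ε, hε, hball⟩ := Metric.isOpen_iff.mp (hc.gap_open n) _ h
  have h2 : glo Uu n - ε/2 ∈ Uu n := by
    apply hball
    rw [Metric.mem_ball, Real.dist_eq, abs_of_neg (by linarith)]
    linarith
  have := csInf_le (hc.gap_bddBelow n) h2
  change glo Uu n ≤ _ at this
  linarith

theorem ghi_not_mem (n : ℕ) : ghi Uu n ∉ Uu n := by
  intro h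
  obtain ⟨ε, hε, hball⟩ := Metric.isOpen_iff.mp (hc.gap_open n) _ h
  have h2 : ghi Uu n + ε/2 ∈ Uu n := by
    apply hball
    rw [Metric.mem_ball, Real.dist_eq, abs_of_pos (by linarith)]
    linarith
  have := le_csSup (hc.gap_bddAbove n) h2
  change _ ≤ ghi Uu n at this
  linarith

theorem gap_eq_Ioo (n : ℕ) : Uu n = Ioo (glo Uu n) (ghi Uu n) := by
  apply Subset.antisymm _ (hc.Ioo_sub_gap n)
  intro x hx
  constructor
  · refine lt_of_le_of_ne (csInf_le (hc.gap_bddBelow n) hx) ?_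
    rintro rfl; exact hc.glo_not_mem n hx
  · refine lt_of_le_of_ne (le_csSup (hc.gap_bddAbove n) hx) ?_
    rintro rfl; exact hc.ghi_not_mem n hx

theorem alpha_le_glo (n : ℕ) : sInf C ≤ glo Uu n :=
  le_csInf (hc.gap_nonempty n) (fun _ hx => (hc.gap_sub_Ioo n hx).1.le)

theorem ghi_le_beta (n : ℕ) : ghi Uu n ≤ sSup C :=
  csSup_le (hc.gap_nonempty n) (fun _ hx => (hc.gap_sub_Ioo n hx).2.le)

theorem glo_mem_C (n : ℕ) : glo Uu n ∈ C := by
  by_contra h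
  have hIcc : glo Uu n ∈ cHull C \ C := by
    refine ⟨⟨hc.alpha_le_glo n, ?_⟩, h⟩
    exact le_trans (hc.glo_lt_ghi n).le (le_trans (hc.ghi_le_beta n) le_rfl)
  obtain ⟨ε, hε, hball⟩ := Metric.isOpen_iff.mp hc.compl_open _ hIcc
  obtain ⟨x₀, hx₀, hcomp0⟩ := hc.gap_spec n
  have hx₀U : x₀ ∈ Uu n := hcomp0 ▸ mem_connectedComponentIn hx₀
  have hx₀I : x₀ ∈ Ioo (glo Uu n) (ghi Uu n) := (hc.gap_eq_Ioo n) ▸ hx₀U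
  have hV : Ioo (glo Uu n - ε/2) (ghi Uu n) ⊆ cHull C \ C := by
    intro y hy
    rcases le_or_gt y (glo Uu n) with h1 | h1
    · apply hball
      rw [Metric.mem_ball, Real.dist_eq, abs_of_nonpos (by linarith)]
      linarith [hy.1]
    · exact hc.gap_sub n (hc.Ioo_sub_gap n ⟨h1, hy.2⟩)
  have hVsub : Ioo (glo Uu n - ε/2) (ghi Uu n) ⊆ Uu n := by
    rw [hcomp0]
    refine isPreconnected_Ioo.subset_connectedComponentIn ?_ hV
    exact ⟨by linarith [hx₀I.1], hx₀I.2⟩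
  have hz : glo Uu n - ε/4 ∈ Uu n := by
    apply hVsub
    constructor <;> [linarith; linarith [hc.glo_lt_ghi n]]
  have := csInf_le (hc.gap_bddBelow n) hz
  change glo Uu n ≤ _ at this
  linarith

theorem ghi_mem_C (n : ℕ) : ghi Uu n ∈ C := by
  by_contra h
  have hIcc : ghi Uu n ∈ cHull C \ C := by
    refine ⟨⟨le_trans (hc.alpha_le_glo n) (hc.glo_lt_ghi n).le, hc.ghi_le_beta n⟩, h⟩
  obtain ⟨ε, hε, hball⟩ := Metric.isOpen_iff.mp hc.compl_open _ hIcc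
  obtain ⟨x₀, hx₀, hcomp0⟩ := hc.gap_spec n
  have hx₀U : x₀ ∈ Uu n := hcomp0 ▸ mem_connectedComponentIn hx₀
  have hx₀I : x₀ ∈ Ioo (glo Uu n) (ghi Uu n) := (hc.gap_eq_Ioo n) ▸ hx₀U
  have hV : Ioo (glo Uu n) (ghi Uu n + ε/2) ⊆ cHull C \ C := by
    intro y hy
    rcases lt_or_ge y (ghi Uu n) with h1 | h1
    · exact hc.gap_sub n (hc.Ioo_sub_gap n ⟨hy.1, h1⟩)
    · apply hball
      rw [Metric.mem_ball, Real.dist_eq, abs_of_nonneg (by linarith)]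
      linarith [hy.2]
  have hVsub : Ioo (glo Uu n) (ghi Uu n + ε/2) ⊆ Uu n := by
    rw [hcomp0]
    refine isPreconnected_Ioo.subset_connectedComponentIn ?_ hV
    exact ⟨hx₀I.1, by linarith [hx₀I.2]⟩
  have hz : ghi Uu n + ε/4 ∈ Uu n := by
    apply hVsub
    constructor <;> [linarith [hc.glo_lt_ghi n]; linarith]
  have := le_csSup (hc.gap_bddAbove n) hz
  change _ ≤ ghi Uu n at this
  linarith

theorem gap_eq_iff {i j : ℕ} (h : (Uu i ∩ Uu j).Nonempty) : i = j := by
  obtain ⟨x, hxi, hxj⟩ := h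
  obtain ⟨xi, hxiA, hi⟩ := hc.gap_spec i
  obtain ⟨xj, hxjA, hj⟩ := hc.gap_spec j
  apply hc.hpres.2.1
  calc Uu i = connectedComponentIn (cHull C \ C) xi := hi
    _ = connectedComponentIn (cHull C \ C) x := connectedComponentIn_eq (by rw [← hi]; exact hxi)
    _ = connectedComponentIn (cHull C \ C) xj :=
        (connectedComponentIn_eq (by rw [← hj]; exact hxj)).symm
    _ = Uu j := hj.symm

/-- a maximal C-free open interval with endpoints in C is a gap -/
theorem freeGap {c d : ℝ} (hcC : c ∈ C) (hdC : d ∈ C) (hcd : c < d)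
    (hfree : ∀ x ∈ Ioo c d, x ∉ C) : ∃ i, Uu i = Ioo c d := by
  have hmid : (c + d)/2 ∈ Ioo c d := ⟨by linarith, by linarith⟩
  have hx : (c + d)/2 ∈ cHull C \ C := by
    refine ⟨⟨le_trans (hc.alpha_le hcC) hmid.1.le, le_trans hmid.2.le (hc.le_beta hdC)⟩,
      hfree _ hmid⟩
  have hIsub : Ioo c d ⊆ cHull C \ C := by
    intro y hy
    exact ⟨⟨le_trans (hc.alpha_le hcC) hy.1.le, le_trans hy.2.le (hc.le_beta hdC)⟩, hfree _ hy⟩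
  obtain ⟨n, hn⟩ := hc.hpres.2.2 (connectedComponentIn (cHull C \ C) ((c+d)/2)) ⟨_, hx, rfl⟩
  refine ⟨n, ?_⟩
  rw [hn]
  apply Subset.antisymm
  · intro y hy
    by_contra hyn
    have hyA : y ∈ cHull C \ C := connectedComponentIn_subset _ _ hy
    have hpc : IsPreconnected (connectedComponentIn (cHull C \ C) ((c+d)/2)) :=
      isPreconnected_connectedComponentIn
    have hmidmem : (c+d)/2 ∈ connectedComponentIn (cHull C \ C) ((c+d)/2) :=
      mem_connectedComponentIn hx
    rcases not_and_or.mp (fun hcon => hyn ⟨hcon.1, hcon.2⟩) with h1 | h1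
    · push_neg at h1
      have : Icc y ((c+d)/2) ⊆ connectedComponentIn (cHull C \ C) ((c+d)/2) :=
        hpc.Icc_subset hy hmidmem
      have hcmem := this ⟨h1, hmid.1.le⟩
      exact (connectedComponentIn_subset _ _ hcmem).2 hcC
    · push_neg at h1
      have : Icc ((c+d)/2) y ⊆ connectedComponentIn (cHull C \ C) ((c+d)/2) :=
        hpc.Icc_subset hmidmem hy
      have hdmem := this ⟨hmid.2.le, h1⟩
      exact (connectedComponentIn_subset _ _ hdmem).2 hdC
  · exact isPreconnected_Ioo.subset_connectedComponentIn hmid hIsub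

/-- distinct gaps cannot share an endpoint (perfectness) -/
theorem no_adjacent (i j : ℕ) : glo Uu i ≠ ghi Uu j := by
  intro heq
  rcases eq_or_ne i j with rfl | hij
  · exact absurd heq (ne_of_lt (hc.glo_lt_ghi i))
  have hxC : glo Uu i ∈ C := hc.glo_mem_C i
  have hacc := hc.hperf.acc _ hxC
  rw [accPt_iff_nhds] at hacc
  obtain ⟨y, ⟨hyV, hyC⟩, hyne⟩ := hacc (Ioo (glo Uu j) (ghi Uu i))
    (isOpen_Ioo.mem_nhds ⟨by rw [heq]; exact hc.glo_lt_ghi j, hc.glo_lt_ghi i⟩)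
  rcases lt_or_gt_of_ne hyne with h1 | h1
  · have : y ∈ Uu j := by
      rw [hc.gap_eq_Ioo j]
      exact ⟨hyV.1, by rw [heq] at h1; exact h1⟩
    exact hc.gap_disjoint_C this hyC
  · have : y ∈ Uu i := by
      rw [hc.gap_eq_Ioo i]
      exact ⟨h1, hyV.2⟩
    exact hc.gap_disjoint_C this hyC

theorem alpha_lt_glo (i : ℕ) : sInf C < glo Uu i := by
  refine lt_of_le_of_ne (hc.alpha_le_glo i) ?_
  intro heq
  have hacc := hc.hperf.acc _ hc.alpha_mem
  rw [accPt_iff_nhds] at hacc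
  obtain ⟨y, ⟨hyV, hyC⟩, hyne⟩ := hacc (Iio (ghi Uu i))
    (isOpen_Iio.mem_nhds (by rw [heq]; exact hc.glo_lt_ghi i))
  have hy1 : sInf C ≤ y := hc.alpha_le hyC
  have : y ∈ Uu i := by
    rw [hc.gap_eq_Ioo i]
    exact ⟨by rw [← heq]; exact lt_of_le_of_ne hy1 (Ne.symm hyne), hyV⟩
  exact hc.gap_disjoint_C this hyC

theorem ghi_lt_beta (i : ℕ) : ghi Uu i < sSup C := by
  refine lt_of_le_of_ne (hc.ghi_le_beta i) ?_
  intro heq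
  have hacc := hc.hperf.acc _ hc.beta_mem
  rw [accPt_iff_nhds] at hacc
  obtain ⟨y, ⟨hyV, hyC⟩, hyne⟩ := hacc (Ioi (glo Uu i))
    (isOpen_Ioi.mem_nhds (by rw [← heq]; exact hc.glo_lt_ghi i))
  have hy1 : y ≤ sSup C := hc.le_beta hyC
  have : y ∈ Uu i := by
    rw [hc.gap_eq_Ioo i]
    exact ⟨hyV, by rw [heq]; exact lt_of_le_of_ne hy1 hyne⟩
  exact hc.gap_disjoint_C this hyC

theorem alpha_lt_beta : sInf C < sSup C :=
  lt_trans (hc.alpha_lt_glo 0) (lt_of_lt_of_le (hc.glo_lt_ghi 0) (hc.ghi_le_beta 0))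

/-- Thickness estimate, left side: the bridge at the left endpoint of gap `i` is
trapped in `[a, glo i]` when `a` is suitably protected. -/
theorem bridge_left {i : ℕ} {a b : ℝ} (haC : a ∈ C) (hbC : b ∈ C)
    (hsub : Uu i ⊆ Ioo a b) (hpa : a = sInf C ∨ ∃ j ≤ i, ghi Uu j = a) :
    t * (ghi Uu i - glo Uu i) ≤ glo Uu i - a := by
  have hglgh := hc.glo_lt_ghi i
  have hab : a ≤ glo Uu i ∧ ghi Uu i ≤ b := by
    rw [hc.gap_eq_Ioo i] at hsub
    exact (Ioo_subset_Ioo_iff hglgh).mp hsub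
  set K := bridge C Uu i (glo Uu i) with hK
  have hKamb : glo Uu i ∈ cHull C \ ⋃ k ∈ Finset.range (i + 1), Uu k := by
    refine ⟨hc.subset_Icc (hc.glo_mem_C i), ?_⟩
    simp only [mem_iUnion, not_exists]
    intro k _
    exact fun h => hc.gap_disjoint_C h (hc.glo_mem_C i)
  have hKmem : glo Uu i ∈ K := mem_connectedComponentIn hKamb
  have hKsub0 : K ⊆ cHull C \ ⋃ k ∈ Finset.range (i + 1), Uu k :=
    connectedComponentIn_subset _ _
  have hKpc : IsPreconnected K := isPreconnected_connectedComponentIn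
  have havoid : ∀ k ≤ i, ∀ y ∈ K, y ∉ Uu k := by
    intro k hk y hy hyk
    have := (hKsub0 hy).2
    simp only [mem_iUnion, not_exists] at this
    exact this k (Finset.mem_range.mpr (Nat.lt_succ_of_le hk)) hyk
  have hKsub : K ⊆ Icc a (glo Uu i) := by
    intro x hx
    constructor
    · by_contra hxa
      push_neg at hxa
      rcases hpa with rfl | ⟨j, hji, hja⟩
      · exact absurd ((hKsub0 hx).1.1) (not_le.mpr hxa)
      · have hIcc : Icc x (glo Uu i) ⊆ K := hKpc.Icc_subset hx hKmem
        have hgj : glo Uu j < a := hja ▸ hc.glo_lt_ghi j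
        set y := (max x (glo Uu j) + a)/2 with hy
        have hy1 : glo Uu j < y := by
          have := le_max_right x (glo Uu j); simp only [hy]; linarith
        have hy2 : y < a := by
          have hxa' := max_lt hxa hgj
          simp only [hy]; linarith
        have hyU : y ∈ Uu j := by
          rw [hc.gap_eq_Ioo j]
          exact ⟨hy1, by rw [hja]; exact hy2⟩
        have hyK : y ∈ K := by
          apply hIcc
          constructor
          · have := le_max_left x (glo Uu j); simp only [hy]; linarith
          · have := hab.1; simp only [hy]; linarith
        exact havoid j hji y hyK hyU
    · by_contra hxg
      push_neg at hxg
      have hIcc : Icc (glo Uu i) x ⊆ K := hKpc.Icc_subset hKmem hx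
      set y := (glo Uu i + min x (ghi Uu i))/2 with hy
      have hmin : glo Uu i < min x (ghi Uu i) := lt_min hxg hglgh
      have hyU : y ∈ Uu i := by
        rw [hc.gap_eq_Ioo i]
        constructor
        · simp only [hy]; linarith
        · have := min_le_right x (ghi Uu i); simp only [hy]; linarith
      have hyK : y ∈ K := by
        apply hIcc
        constructor
        · simp only [hy]; linarith
        · have := min_le_left x (ghi Uu i); simp only [hy]; linarith
      exact havoid i le_rfl y hyK hyU
  have hdiam : Metric.diam K ≤ glo Uu i - a := by
    have h1 := Metric.diam_mono hKsub (Metric.isBounded_Icc _ _)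
    rwa [Real.diam_Icc hab.1] at h1
  have hfr : glo Uu i ∈ frontier (Uu i) ∩ C := by
    rw [hc.gap_eq_Ioo i, frontier_Ioo hglgh]
    exact ⟨Or.inl rfl, hc.glo_mem_C i⟩
  have h1 := hc.hth i _ hfr
  rw [gapRatio] at h1
  have hdU : Metric.diam (Uu i) = ghi Uu i - glo Uu i := by
    rw [hc.gap_eq_Ioo i]
    exact Real.diam_Ioo hglgh.le
  rw [hdU] at h1
  have hg : (0:ℝ) < ghi Uu i - glo Uu i := by linarith
  have h2 : ENNReal.ofReal t * ENNReal.ofReal (ghi Uu i - glo Uu i)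
      < ENNReal.ofReal (Metric.diam (bridge C Uu i (glo Uu i))) := by
    refine (ENNReal.lt_div_iff_mul_lt (Or.inl ?_) (Or.inl ?_)).mp h1
    · exact (ENNReal.ofReal_pos.mpr hg).ne'
    · exact ENNReal.ofReal_ne_top
  rw [← ENNReal.ofReal_mul hc.ht.le] at h2
  have h3 := (ENNReal.ofReal_lt_ofReal_iff_of_nonneg
    (mul_nonneg hc.ht.le hg.le)).mp h2
  calc t * (ghi Uu i - glo Uu i) ≤ Metric.diam (bridge C Uu i (glo Uu i)) := h3.le
    _ ≤ glo Uu i - a := hdiam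

/-- Thickness estimate, right side. -/
theorem bridge_right {i : ℕ} {a b : ℝ} (haC : a ∈ C) (hbC : b ∈ C)
    (hsub : Uu i ⊆ Ioo a b) (hpb : b = sSup C ∨ ∃ j ≤ i, glo Uu j = b) :
    t * (ghi Uu i - glo Uu i) ≤ b - ghi Uu i := by
  have hglgh := hc.glo_lt_ghi i
  have hab : a ≤ glo Uu i ∧ ghi Uu i ≤ b := by
    rw [hc.gap_eq_Ioo i] at hsub
    exact (Ioo_subset_Ioo_iff hglgh).mp hsub
  set K := bridge C Uu i (ghi Uu i) with hK
  have hKamb : ghi Uu i ∈ cHull C \ ⋃ k ∈ Finset.range (i + 1), Uu k := by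
    refine ⟨hc.subset_Icc (hc.ghi_mem_C i), ?_⟩
    simp only [mem_iUnion, not_exists]
    intro k _
    exact fun h => hc.gap_disjoint_C h (hc.ghi_mem_C i)
  have hKmem : ghi Uu i ∈ K := mem_connectedComponentIn hKamb
  have hKsub0 : K ⊆ cHull C \ ⋃ k ∈ Finset.range (i + 1), Uu k :=
    connectedComponentIn_subset _ _
  have hKpc : IsPreconnected K := isPreconnected_connectedComponentIn
  have havoid : ∀ k ≤ i, ∀ y ∈ K, y ∉ Uu k := by
    intro k hk y hy hyk
    have := (hKsub0 hy).2
    simp only [mem_iUnion, not_exists] at this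
    exact this k (Finset.mem_range.mpr (Nat.lt_succ_of_le hk)) hyk
  have hKsub : K ⊆ Icc (ghi Uu i) b := by
    intro x hx
    constructor
    · by_contra hxg
      push_neg at hxg
      have hIcc : Icc x (ghi Uu i) ⊆ K := hKpc.Icc_subset hx hKmem
      set y := (max x (glo Uu i) + ghi Uu i)/2 with hy
      have hmax : max x (glo Uu i) < ghi Uu i := max_lt hxg hglgh
      have hyU : y ∈ Uu i := by
        rw [hc.gap_eq_Ioo i]
        constructor
        · have := le_max_right x (glo Uu i); simp only [hy]; linarith
        · simp only [hy]; linarith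
      have hyK : y ∈ K := by
        apply hIcc
        constructor
        · have := le_max_left x (glo Uu i); simp only [hy]; linarith
        · simp only [hy]; linarith
      exact havoid i le_rfl y hyK hyU
    · by_contra hxb
      push_neg at hxb
      rcases hpb with rfl | ⟨j, hji, hjb⟩
      · exact absurd ((hKsub0 hx).1.2) (not_le.mpr hxb)
      · have hIcc : Icc (ghi Uu i) x ⊆ K := hKpc.Icc_subset hKmem hx
        have hgj : b < ghi Uu j := hjb ▸ hc.glo_lt_ghi j
        set y := (b + min x (ghi Uu j))/2 with hy
        have hmin : b < min x (ghi Uu j) := lt_min hxb hgj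
        have hyU : y ∈ Uu j := by
          rw [hc.gap_eq_Ioo j]
          constructor
          · rw [hjb]; simp only [hy]; linarith
          · have := min_le_right x (ghi Uu j); simp only [hy]; linarith
        have hyK : y ∈ K := by
          apply hIcc
          constructor
          · have := hab.2; simp only [hy]; linarith
          · have := min_le_left x (ghi Uu j); simp only [hy]; linarith
        exact havoid j hji y hyK hyU
  have hdiam : Metric.diam K ≤ b - ghi Uu i := by
    have h1 := Metric.diam_mono hKsub (Metric.isBounded_Icc _ _)
    rwa [Real.diam_Icc hab.2] at h1
  have hfr : ghi Uu i ∈ frontier (Uu i) ∩ C := by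
    rw [hc.gap_eq_Ioo i, frontier_Ioo hglgh]
    exact ⟨Or.inr rfl, hc.ghi_mem_C i⟩
  have h1 := hc.hth i _ hfr
  rw [gapRatio] at h1
  have hdU : Metric.diam (Uu i) = ghi Uu i - glo Uu i := by
    rw [hc.gap_eq_Ioo i]
    exact Real.diam_Ioo hglgh.le
  rw [hdU] at h1
  have hg : (0:ℝ) < ghi Uu i - glo Uu i := by linarith
  have h2 : ENNReal.ofReal t * ENNReal.ofReal (ghi Uu i - glo Uu i)
      < ENNReal.ofReal (Metric.diam (bridge C Uu i (ghi Uu i))) := by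
    refine (ENNReal.lt_div_iff_mul_lt (Or.inl ?_) (Or.inl ?_)).mp h1
    · exact (ENNReal.ofReal_pos.mpr hg).ne'
    · exact ENNReal.ofReal_ne_top
  rw [← ENNReal.ofReal_mul hc.ht.le] at h2
  have h3 := (ENNReal.ofReal_lt_ofReal_iff_of_nonneg
    (mul_nonneg hc.ht.le hg.le)).mp h2
  calc t * (ghi Uu i - glo Uu i) ≤ Metric.diam (bridge C Uu i (ghi Uu i)) := h3.le
    _ ≤ b - ghi Uu i := hdiam

end Ctx

/-- monotone difference lemma for concave powers -/
theorem diffMono {s : ℝ} (hs : 0 < s) (hs1 : s ≤ 1) {D u v : ℝ} (hD : 0 ≤ D) (hu : 0 ≤ u)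
    (huv : u ≤ v) : (v + D) ^ s - v ^ s ≤ (u + D) ^ s - u ^ s := by
  rcases eq_or_lt_of_le huv with rfl | hlt
  · exact le_rfl
  set f : ℝ → ℝ := fun x => (x + D) ^ s - x ^ s with hf
  have hcont : ContinuousOn f (Icc u v) := by
    apply ContinuousOn.sub
    · intro x _
      exact ((Real.continuousAt_rpow_const _ s (Or.inr hs.le)).comp
        (continuousAt_id.add continuousAt_const)).continuousWithinAt
    · intro x _
      exact (Real.continuousAt_rpow_const _ s (Or.inr hs.le)).continuousWithinAt
  have hderiv : ∀ x ∈ interior (Icc u v), HasDerivAt f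
      (s * (x + D) ^ (s - 1) - s * x ^ (s - 1)) x := by
    intro x hx
    rw [interior_Icc] at hx
    have hx0 : 0 < x := lt_of_le_of_lt hu hx.1
    have hxD : 0 < x + D := by linarith
    have h1 : HasDerivAt (fun x : ℝ => (x + D) ^ s) (s * (x + D) ^ (s - 1)) x := by
      have h1a := Real.hasDerivAt_rpow_const (x := x + D) (p := s) (Or.inl hxD.ne')
      have h1b : HasDerivAt (fun y : ℝ => y + D) 1 x := (hasDerivAt_id x).add_const D
      have := h1a.comp x h1b
      simpa using (mul_one (s * (x + D) ^ (s - 1))) ▸ this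
    have h2 := Real.hasDerivAt_rpow_const (x := x) (p := s) (Or.inl hx0.ne')
    exact h1.sub h2
  have hanti : AntitoneOn f (Icc u v) := by
    apply antitoneOn_of_deriv_nonpos (convex_Icc u v) hcont
    · intro x hx
      exact (hderiv x hx).differentiableAt.differentiableWithinAt
    · intro x hx
      rw [(hderiv x hx).deriv]
      rw [interior_Icc] at hx
      have hx0 : 0 < x := lt_of_le_of_lt hu hx.1
      have hxD : 0 < x + D := by linarith
      have hle : (x + D) ^ (s - 1) ≤ x ^ (s - 1) := by
        rw [show s - 1 = -(1 - s) by ring, Real.rpow_neg hx0.le, Real.rpow_neg hxD.le]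
        apply inv_anti₀ (Real.rpow_pos_of_pos hx0 _)
        exact Real.rpow_le_rpow hx0.le (by linarith) (by linarith)
      nlinarith [hs.le]
  exact hanti (left_mem_Icc.mpr huv) (right_mem_Icc.mpr huv) huv

/-- subadditivity of x ↦ x^s for 0 < s ≤ 1 -/
theorem subadd {s : ℝ} (hs : 0 < s) (hs1 : s ≤ 1) {x y : ℝ} (hx : 0 ≤ x) (hy : 0 ≤ y) :
    (x + y) ^ s ≤ x ^ s + y ^ s := by
  have h := diffMono hs hs1 (D := y) (u := 0) (v := x) hy le_rfl hx
  rw [zero_add, Real.zero_rpow hs.ne'] at h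
  linarith

theorem keyineq_aux {t s : ℝ} (ht : 0 < t) (hs : 0 < s) (hs1 : s ≤ 1)
    (hst : (2 + 1/t) ^ s ≤ (2:ℝ)) {A B g : ℝ} (hg : 0 < g) (hA : t * g ≤ A) (hB : t * g ≤ B)
    (hAB : A ≤ B) : (A + g + B) ^ s ≤ A ^ s + B ^ s := by
  have hA0 : 0 < A := lt_of_lt_of_le (mul_pos ht hg) hA
  have hB0 : 0 < B := lt_of_lt_of_le (mul_pos ht hg) hB
  have hgA : g ≤ A / t := by
    rw [le_div_iff₀ ht]
    linarith [hA]
  have ht' : 0 < 1/t := by positivity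
  have hD : (0:ℝ) ≤ (1 + 1/t) * A := by positivity
  have step1 : (A + g + B) ^ s ≤ (B + (1 + 1/t) * A) ^ s := by
    apply Real.rpow_le_rpow (by linarith) _ hs.le
    have : A / t = (1/t) * A := by ring
    nlinarith [hgA]
  have step2 : (B + (1 + 1/t) * A) ^ s - B ^ s ≤ (A + (1 + 1/t) * A) ^ s - A ^ s :=
    diffMono hs hs1 hD hA0.le hAB
  have hADeq : A + (1 + 1/t) * A = (2 + 1/t) * A := by ring
  have step3 : ((2 + 1/t) * A) ^ s = (2 + 1/t) ^ s * A ^ s :=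
    Real.mul_rpow (by positivity) hA0.le
  have step4 : (2 + 1/t) ^ s * A ^ s ≤ 2 * A ^ s :=
    mul_le_mul_of_nonneg_right hst (Real.rpow_nonneg hA0.le s)
  have hApow : (0:ℝ) ≤ A ^ s := Real.rpow_nonneg hA0.le s
  rw [hADeq, step3] at step2
  linarith

theorem keyineq {t s : ℝ} (ht : 0 < t) (hs : 0 < s) (hs1 : s ≤ 1)
    (hst : (2 + 1/t) ^ s ≤ (2:ℝ)) {A B g : ℝ} (hg : 0 < g) (hA : t * g ≤ A) (hB : t * g ≤ B) :
    (A + g + B) ^ s ≤ A ^ s + B ^ s := by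
  rcases le_total A B with h | h
  · exact keyineq_aux ht hs hs1 hst hg hA hB h
  · have := keyineq_aux ht hs hs1 hst hg hB hA h
    calc (A + g + B) ^ s = (B + g + A) ^ s := by ring_nf
      _ ≤ B ^ s + A ^ s := this
      _ = A ^ s + B ^ s := by ring

/-- the cost of an interval (given as a pair of endpoints) -/
noncomputable def cost (s : ℝ) (p : ℝ × ℝ) : ℝ := max (p.2 - p.1) 0 ^ s

theorem cost_nonneg {s : ℝ} {p : ℝ × ℝ} : 0 ≤ cost s p :=
  Real.rpow_nonneg (le_max_right _ _) _

theorem le_cost {s x : ℝ} {p : ℝ × ℝ} (hs : 0 ≤ s) (hx : 0 ≤ x) (h : x ≤ p.2 - p.1) :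
    x ^ s ≤ cost s p :=
  Real.rpow_le_rpow hx (le_max_of_le_left h) hs

theorem ioo_order {p q : ℝ × ℝ} {x y : ℝ} (hd : Ioo p.1 p.2 ∩ Ioo q.1 q.2 = ∅)
    (hp : x ∈ Ioo p.1 p.2) (hq : y ∈ Ioo q.1 q.2) : p.2 ≤ q.1 ∨ q.2 ≤ p.1 := by
  by_contra h
  push_neg at h
  obtain ⟨h1, h2⟩ := h
  set z := (max p.1 q.1 + min p.2 q.2)/2 with hz
  have hmm : max p.1 q.1 < min p.2 q.2 := by
    rcases max_cases p.1 q.1 with ⟨he, _⟩ | ⟨he, _⟩ <;> rcases min_cases p.2 q.2 with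
      ⟨he2, _⟩ | ⟨he2, _⟩ <;> rw [he, he2] <;> linarith [hp.1, hp.2, hq.1, hq.2]
  have hzp : z ∈ Ioo p.1 p.2 := by
    constructor
    · have := le_max_left p.1 q.1; simp only [hz]; linarith
    · have := min_le_left p.2 q.2; simp only [hz]; linarith
  have hzq : z ∈ Ioo q.1 q.2 := by
    constructor
    · have := le_max_right p.1 q.1; simp only [hz]; linarith
    · have := min_le_right p.2 q.2; simp only [hz]; linarith
  exact absurd (mem_inter hzp hzq) (by rw [hd]; exact notMem_empty z)

/-- a gap of the cover structure: contained in `(a,b)` and not swallowed by a single interval -/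
def SplitGap (Uu : ℕ → Set ℝ) (F : Finset (ℝ × ℝ)) (a b : ℝ) (i : ℕ) : Prop :=
  Uu i ⊆ Ioo a b ∧ ∀ p ∈ F, ¬(glo Uu i ∈ Ioo p.1 p.2 ∧ ghi Uu i ∈ Ioo p.1 p.2)

/-- The core covering estimate: a disjoint family of open intervals covering the part of `C`
inside a protected pair `(a,b)` has total `s`-cost at least `(b-a)^s`. -/
theorem combined {C : Set ℝ} {Uu : ℕ → Set ℝ} {t s : ℝ} (hc : Ctx C Uu t s) :
    ∀ (k : ℕ) (F : Finset (ℝ × ℝ)) (a b : ℝ), F.card ≤ k → a ∈ C → b ∈ C → a < b →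
    (∀ p ∈ F, ∀ q ∈ F, p ≠ q → Ioo p.1 p.2 ∩ Ioo q.1 q.2 = ∅) →
    (∀ x ∈ C, x ∈ Icc a b → ∃ p ∈ F, x ∈ Ioo p.1 p.2) →
    (a = sInf C ∨ ∃ j, ghi Uu j = a ∧ ∀ i, SplitGap Uu F a b i → j ≤ i) →
    (b = sSup C ∨ ∃ j, glo Uu j = b ∧ ∀ i, SplitGap Uu F a b i → j ≤ i) →
    (b - a) ^ s ≤ ∑ p ∈ F, cost s p := by
  intro k
  induction k with
  | zero =>
    intro F a b hcard haC hbC hab hdisj hcov hPL hPR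
    obtain ⟨p, hp, _⟩ := hcov a haC ⟨le_rfl, hab.le⟩
    rw [Nat.le_zero, Finset.card_eq_zero] at hcard
    subst hcard
    exact absurd hp (Finset.notMem_empty p)
  | succ k IH =>
    intro F a b hcard haC hbC hab hdisj hcov hPL hPR
    by_cases hbase : ∃ p ∈ F, a ∈ Ioo p.1 p.2 ∧ b ∈ Ioo p.1 p.2
    · obtain ⟨p, hpF, hap, hbp⟩ := hbase
      have h1 : b - a ≤ p.2 - p.1 := by
        have := hap.1; have := hbp.2; linarith
      have h2 : (b - a) ^ s ≤ cost s p := le_cost hc.hs.le (by linarith) h1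
      exact h2.trans (Finset.single_le_sum (f := cost s) (fun q _ => cost_nonneg) hpF)
    · -- a is covered by some interval pa
      obtain ⟨pa, hpaF, hapa⟩ := hcov a haC ⟨le_rfl, hab.le⟩
      have hbpa : b ∉ Ioo pa.1 pa.2 := fun hb => hbase ⟨pa, hpaF, hapa, hb⟩
      have hpa2b : pa.2 ≤ b := by
        by_contra h
        push_neg at h
        exact hbpa ⟨lt_trans hapa.1 hab, h⟩
      -- the last point of C ∩ [a,b] before pa.2
      have hS1comp : IsCompact (C ∩ (Icc a b ∩ Iic pa.2)) :=
        hc.hcomp.inter_right (isClosed_Icc.inter isClosed_Iic)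
      have hS1ne : (C ∩ (Icc a b ∩ Iic pa.2)).Nonempty :=
        ⟨a, haC, ⟨le_rfl, hab.le⟩, hapa.2.le⟩
      set c := sSup (C ∩ (Icc a b ∩ Iic pa.2)) with hcdef
      have hcS1 : c ∈ C ∩ (Icc a b ∩ Iic pa.2) := hS1comp.sSup_mem hS1ne
      have hcC : c ∈ C := hcS1.1
      have hac : a ≤ c := hcS1.2.1.1
      have hcb : c ≤ b := hcS1.2.1.2
      have hcub : ∀ x ∈ C, x ∈ Icc a b → x ≤ pa.2 → x ≤ c := fun x h1 h2 h3 =>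
        le_csSup hS1comp.bddAbove ⟨h1, h2, h3⟩
      -- the interval containing a point of C inside [a,b] and left of pa.2 must be pa itself
      have huniq : ∀ x, a ≤ x → x ≤ pa.2 → ∀ m ∈ F, x ∈ Ioo m.1 m.2 → m = pa := by
        intro x hx1 hx2 m hmF hxm
        by_contra hne
        rcases ioo_order (hdisj m hmF pa hpaF hne) hxm hapa with h | h
        · have := hxm.2; have := hapa.1; linarith
        · have := hxm.1; linarith
      obtain ⟨m, hmF, hcm⟩ := hcov c hcC ⟨hac, hcb⟩
      have hmpa : m = pa := huniq c hac hcS1.2.2 m hmF hcm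
      have hcpa : c ∈ Ioo pa.1 pa.2 := hmpa ▸ hcm
      -- the first point of C ∩ [a,b] after pa.2
      have hS2comp : IsCompact (C ∩ (Icc a b ∩ Ici pa.2)) :=
        hc.hcomp.inter_right (isClosed_Icc.inter isClosed_Ici)
      have hS2ne : (C ∩ (Icc a b ∩ Ici pa.2)).Nonempty := ⟨b, hbC, ⟨hab.le, le_rfl⟩, hpa2b⟩
      set d := sInf (C ∩ (Icc a b ∩ Ici pa.2)) with hddef
      have hdS2 : d ∈ C ∩ (Icc a b ∩ Ici pa.2) := hS2comp.sInf_mem hS2ne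
      have hdC : d ∈ C := hdS2.1
      have hdb : d ≤ b := hdS2.2.1.2
      have hcd : c < d := lt_of_lt_of_le hcpa.2 hdS2.2.2
      have hfree : ∀ x ∈ Ioo c d, x ∉ C := by
        intro x hx hxC
        have hxI : x ∈ Icc a b := ⟨le_trans hac hx.1.le, le_trans hx.2.le hdb⟩
        rcases le_or_gt x pa.2 with h | h
        · exact absurd (hcub x hxC hxI h) (not_le.mpr hx.1)
        · have : d ≤ x := csInf_le hS2comp.bddBelow ⟨hxC, hxI, h.le⟩
          linarith [hx.2]
      obtain ⟨i1, hi1⟩ := hc.freeGap hcC hdC hcd hfree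
      have hi1lo : glo Uu i1 = c := by rw [glo, hi1]; exact csInf_Ioo hcd
      have hi1hi : ghi Uu i1 = d := by rw [ghi, hi1]; exact csSup_Ioo hcd
      -- i1 is a split gap
      have hi1SG : SplitGap Uu F a b i1 := by
        constructor
        · rw [hi1]
          intro x hx
          exact ⟨lt_of_le_of_lt hac hx.1, lt_of_lt_of_le hx.2 hdb⟩
        · rintro p hpF ⟨h1, h2⟩
          rw [hi1lo] at h1
          rw [hi1hi] at h2
          have hppa := huniq c hac hcS1.2.2 p hpF h1
          subst hppa
          have hge : p.2 ≤ d := hdS2.2.2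
          have hlt : d < p.2 := h2.2
          linarith
      -- the minimal split gap index
      set SG := {i : ℕ | SplitGap Uu F a b i} with hSG
      set i0 := sInf SG with hi0def
      have hi0SG : SplitGap Uu F a b i0 := Nat.sInf_mem (⟨i1, hi1SG⟩ : SG.Nonempty)
      have hi0min : ∀ i, SplitGap Uu F a b i → i0 ≤ i := fun i hi => Nat.sInf_le hi
      set c0 := glo Uu i0 with hc0def
      set d0 := ghi Uu i0 with hd0def
      have hc0d0 : c0 < d0 := hc.glo_lt_ghi i0
      have hsub0 : Uu i0 ⊆ Ioo a b := hi0SG.1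
      have hbounds : a ≤ c0 ∧ d0 ≤ b := by
        rw [hc.gap_eq_Ioo i0] at hsub0
        exact (Ioo_subset_Ioo_iff hc0d0).mp hsub0
      have hac0 : a < c0 := by
        rcases lt_or_eq_of_le hbounds.1 with h | h
        · exact h
        · exfalso
          rcases hPL with h2 | ⟨j, hj, _⟩
          · exact absurd (h2.symm.trans h) (hc.alpha_lt_glo i0).ne
          · exact hc.no_adjacent i0 j (h.symm.trans hj.symm)
      have hd0b : d0 < b := by
        rcases lt_or_eq_of_le hbounds.2 with h | h
        · exact h
        · exfalso
          rcases hPR with h2 | ⟨j, hj, _⟩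
          · exact absurd (h.trans h2) (hc.ghi_lt_beta i0).ne
          · exact hc.no_adjacent j i0 (hj.trans h.symm)
      -- thickness bounds on the two sides
      have hprotL : a = sInf C ∨ ∃ j ≤ i0, ghi Uu j = a := by
        rcases hPL with h | ⟨j, hj, hmin⟩
        · exact Or.inl h
        · exact Or.inr ⟨j, hmin i0 hi0SG, hj⟩
      have hprotR : b = sSup C ∨ ∃ j ≤ i0, glo Uu j = b := by
        rcases hPR with h | ⟨j, hj, hmin⟩
        · exact Or.inl h
        · exact Or.inr ⟨j, hmin i0 hi0SG, hj⟩
      have hbl := hc.bridge_left haC hbC (hi0SG.1) hprotL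
      have hbr := hc.bridge_right haC hbC (hi0SG.1) hprotR
      have hkey : (b - a) ^ s ≤ (c0 - a) ^ s + (b - d0) ^ s := by
        have heq : b - a = (c0 - a) + (d0 - c0) + (b - d0) := by ring
        rw [heq]
        exact keyineq hc.ht hc.hs hc.hs1.le hc.hst (by linarith) hbl hbr
      -- children
      set F1 := F.filter (fun p => p.1 < c0) with hF1def
      set F2 := F.filter (fun p => ¬ p.1 < c0) with hF2def
      have hF1sub : F1 ⊆ F := Finset.filter_subset _ _
      have hF2sub : F2 ⊆ F := Finset.filter_subset _ _
      -- the interval containing d0 is in F2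
      obtain ⟨p', hp'F, hdp'⟩ := hcov d0 (hc.ghi_mem_C i0) ⟨by linarith, hbounds.2⟩
      have hp'F2 : ¬ p'.1 < c0 := by
        intro h
        exact hi0SG.2 p' hp'F ⟨⟨h, lt_trans hc0d0 hdp'.2⟩, hdp'⟩
      -- the interval containing c0 is in F1
      obtain ⟨p'', hp''F, hcp''⟩ := hcov c0 (hc.glo_mem_C i0) ⟨hbounds.1, by linarith⟩
      have hp''F1 : p''.1 < c0 := hcp''.1
      -- cardinalities
      have hcard1 : F1.card ≤ k := by
        have hsub : F1 ⊆ F.erase p' := by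
          intro p hp
          rw [Finset.mem_erase]
          refine ⟨?_, hF1sub hp⟩
          intro heq
          subst heq
          exact hp'F2 (Finset.mem_filter.mp hp).2
        calc F1.card ≤ (F.erase p').card := Finset.card_le_card hsub
          _ = F.card - 1 := Finset.card_erase_of_mem hp'F
          _ ≤ k := by omega
      have hcard2 : F2.card ≤ k := by
        have hsub : F2 ⊆ F.erase p'' := by
          intro p hp
          rw [Finset.mem_erase]
          refine ⟨?_, hF2sub hp⟩
          intro heq
          subst heq
          exact (Finset.mem_filter.mp hp).2 hp''F1
        calc F2.card ≤ (F.erase p'').card := Finset.card_le_card hsub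
          _ = F.card - 1 := Finset.card_erase_of_mem hp''F
          _ ≤ k := by omega
      -- lifting split gaps of the children to split gaps of F
      have hlift1 : ∀ i, SplitGap Uu F1 a c0 i → SplitGap Uu F a b i := by
        rintro i ⟨hsub, hnp⟩
        have hbnd : a ≤ glo Uu i ∧ ghi Uu i ≤ c0 := by
          rw [hc.gap_eq_Ioo i] at hsub
          exact (Ioo_subset_Ioo_iff (hc.glo_lt_ghi i)).mp hsub
        constructor
        · exact hsub.trans (Ioo_subset_Ioo le_rfl (by linarith))
        · intro p hpF hboth
          by_cases hp1 : p.1 < c0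
          · exact hnp p (Finset.mem_filter.mpr ⟨hpF, hp1⟩) hboth
          · have h1 : glo Uu i < c0 := lt_of_lt_of_le (hc.glo_lt_ghi i) hbnd.2
            have h2 : p.1 < glo Uu i := hboth.1.1
            push_neg at hp1
            linarith
      have hlift2 : ∀ i, SplitGap Uu F2 d0 b i → SplitGap Uu F a b i := by
        rintro i ⟨hsub, hnp⟩
        have hbnd : d0 ≤ glo Uu i ∧ ghi Uu i ≤ b := by
          rw [hc.gap_eq_Ioo i] at hsub
          exact (Ioo_subset_Ioo_iff (hc.glo_lt_ghi i)).mp hsub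
        constructor
        · exact hsub.trans (Ioo_subset_Ioo (by linarith) le_rfl)
        · intro p hpF hboth
          by_cases hp1 : p.1 < c0
          · exfalso
            have h2 : glo Uu i < p.2 := hboth.1.2
            exact hi0SG.2 p hpF ⟨⟨hp1, by linarith⟩, ⟨by linarith, by linarith⟩⟩
          · exact hnp p (Finset.mem_filter.mpr ⟨hpF, hp1⟩) hboth
      -- covers for the children
      have hcov1 : ∀ x ∈ C, x ∈ Icc a c0 → ∃ p ∈ F1, x ∈ Ioo p.1 p.2 := by
        intro x hxC hxI
        obtain ⟨p, hpF, hxp⟩ := hcov x hxC ⟨hxI.1, le_trans hxI.2 (by linarith)⟩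
        exact ⟨p, Finset.mem_filter.mpr ⟨hpF, lt_of_lt_of_le hxp.1 hxI.2⟩, hxp⟩
      have hcov2 : ∀ x ∈ C, x ∈ Icc d0 b → ∃ p ∈ F2, x ∈ Ioo p.1 p.2 := by
        intro x hxC hxI
        obtain ⟨p, hpF, hxp⟩ := hcov x hxC ⟨by linarith [hxI.1], hxI.2⟩
        refine ⟨p, Finset.mem_filter.mpr ⟨hpF, ?_⟩, hxp⟩
        intro hp1
        have h2 : d0 < p.2 := lt_of_le_of_lt hxI.1 hxp.2
        exact hi0SG.2 p hpF ⟨⟨hp1, by linarith⟩, ⟨by linarith, h2⟩⟩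
      -- apply the induction hypothesis on both sides
      have hIH1 : (c0 - a) ^ s ≤ ∑ p ∈ F1, cost s p := by
        apply IH F1 a c0 hcard1 haC (hc.glo_mem_C i0) hac0
          (fun p hp q hq => hdisj p (hF1sub hp) q (hF1sub hq))
          hcov1
        · rcases hPL with h | ⟨j, hj, hmin⟩
          · exact Or.inl h
          · exact Or.inr ⟨j, hj, fun i hi => hmin i (hlift1 i hi)⟩
        · exact Or.inr ⟨i0, rfl, fun i hi => hi0min i (hlift1 i hi)⟩
      have hIH2 : (b - d0) ^ s ≤ ∑ p ∈ F2, cost s p := by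
        apply IH F2 d0 b hcard2 (hc.ghi_mem_C i0) hbC hd0b
          (fun p hp q hq => hdisj p (hF2sub hp) q (hF2sub hq))
          hcov2
        · exact Or.inr ⟨i0, rfl, fun i hi => hi0min i (hlift2 i hi)⟩
        · rcases hPR with h | ⟨j, hj, hmin⟩
          · exact Or.inl h
          · exact Or.inr ⟨j, hj, fun i hi => hmin i (hlift2 i hi)⟩
      have hsplit : ∑ p ∈ F1, cost s p + ∑ p ∈ F2, cost s p = ∑ p ∈ F, cost s p :=
        Finset.sum_filter_add_sum_filter_not F _ _
      calc (b - a) ^ s ≤ (c0 - a) ^ s + (b - d0) ^ s := hkey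
        _ ≤ ∑ p ∈ F1, cost s p + ∑ p ∈ F2, cost s p := add_le_add hIH1 hIH2
        _ = ∑ p ∈ F, cost s p := hsplit

/-- Main covering estimate: any finite cover of `C` by open intervals has total `s`-cost at
least `(sSup C - sInf C)^s`. -/
theorem main_cover {C : Set ℝ} {Uu : ℕ → Set ℝ} {t s : ℝ} (hc : Ctx C Uu t s) :
    ∀ (k : ℕ) (F : Finset (ℝ × ℝ)), F.card ≤ k →
    (∀ x ∈ C, ∃ p ∈ F, x ∈ Ioo p.1 p.2) →
    (sSup C - sInf C) ^ s ≤ ∑ p ∈ F, cost s p := by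
  intro k
  induction k with
  | zero =>
    intro F hcard hcov
    obtain ⟨x, hx⟩ := hc.hne
    obtain ⟨p, hp, _⟩ := hcov x hx
    rw [Nat.le_zero, Finset.card_eq_zero] at hcard
    subst hcard
    exact absurd hp (Finset.notMem_empty p)
  | succ k IH =>
    intro F hcard hcov
    by_cases hov : ∃ p ∈ F, ∃ q ∈ F, p ≠ q ∧ (Ioo p.1 p.2 ∩ Ioo q.1 q.2).Nonempty
    · obtain ⟨p, hp, q, hq, hne, z, hzp, hzq⟩ := hov
      set m : ℝ × ℝ := (min p.1 q.1, max p.2 q.2) with hm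
      set E := (F.erase p).erase q with hE
      set F' := insert m E with hF'
      have hqE : q ∈ F.erase p := Finset.mem_erase.mpr ⟨fun h => hne h.symm, hq⟩
      have hcard2 : 2 ≤ F.card := Finset.one_lt_card.mpr ⟨p, hp, q, hq, hne⟩
      have hcard' : F'.card ≤ k := by
        calc F'.card ≤ E.card + 1 := Finset.card_insert_le _ _
          _ = (F.erase p).card - 1 + 1 := by rw [Finset.card_erase_of_mem hqE]
          _ = (F.card - 1) - 1 + 1 := by rw [Finset.card_erase_of_mem hp]
          _ ≤ k := by omega
      have hcov' : ∀ x ∈ C, ∃ r ∈ F', x ∈ Ioo r.1 r.2 := by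
        intro x hx
        obtain ⟨r, hr, hxr⟩ := hcov x hx
        rcases eq_or_ne r p with rfl | hrp
        · refine ⟨m, Finset.mem_insert_self _ _, ?_, ?_⟩
          · exact lt_of_le_of_lt (min_le_left _ _) hxr.1
          · exact lt_of_lt_of_le hxr.2 (le_max_left _ _)
        rcases eq_or_ne r q with rfl | hrq
        · refine ⟨m, Finset.mem_insert_self _ _, ?_, ?_⟩
          · exact lt_of_le_of_lt (min_le_right _ _) hxr.1
          · exact lt_of_lt_of_le hxr.2 (le_max_right _ _)
        exact ⟨r, Finset.mem_insert_of_mem (Finset.mem_erase.mpr ⟨hrq,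
          Finset.mem_erase.mpr ⟨hrp, hr⟩⟩), hxr⟩
      have hmcost : cost s m ≤ cost s p + cost s q := by
        have hlen : max p.2 q.2 - min p.1 q.1 ≤ (p.2 - p.1) + (q.2 - q.1) := by
          rcases le_total p.2 q.2 with h1 | h1 <;> rcases le_total p.1 q.1 with h2 | h2 <;>
            simp [max_eq_left, max_eq_right, min_eq_left, min_eq_right, h1, h2] <;>
            linarith [hzp.1, hzp.2, hzq.1, hzq.2]
        have hp0 : (0:ℝ) < p.2 - p.1 := by linarith [hzp.1, hzp.2]
        have hq0 : (0:ℝ) < q.2 - q.1 := by linarith [hzq.1, hzq.2]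
        have h1 : cost s m ≤ ((p.2 - p.1) + (q.2 - q.1)) ^ s := by
          apply Real.rpow_le_rpow (le_max_right _ _) _ hc.hs.le
          apply max_le _ (by linarith)
          exact hlen
        have h2 := subadd hc.hs hc.hs1.le hp0.le hq0.le
        have h3 : cost s p = (p.2 - p.1) ^ s := by rw [cost, max_eq_left hp0.le]
        have h4 : cost s q = (q.2 - q.1) ^ s := by rw [cost, max_eq_left hq0.le]
        rw [h3, h4]
        exact h1.trans h2
      have hsum : ∑ r ∈ F', cost s r ≤ ∑ r ∈ F, cost s r := by
        have h1 : ∑ r ∈ E, cost s r + cost s q = ∑ r ∈ F.erase p, cost s r :=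
          Finset.sum_erase_add _ _ hqE
        have h2 : ∑ r ∈ F.erase p, cost s r + cost s p = ∑ r ∈ F, cost s r :=
          Finset.sum_erase_add _ _ hp
        have h3 : ∑ r ∈ F', cost s r ≤ cost s m + ∑ r ∈ E, cost s r := by
          rcases em (m ∈ E) with hmE | hmE
          · rw [hF', Finset.insert_eq_self.mpr hmE]
            exact le_add_of_nonneg_left cost_nonneg
          · rw [hF', Finset.sum_insert hmE]
        linarith [hmcost]
      exact (IH F' hcard' hcov').trans hsum
    · push_neg at hov
      exact combined hc (k+1) F (sInf C) (sSup C) hcard hc.alpha_mem hc.beta_mem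
        hc.alpha_lt_beta hov (fun x hx _ => hcov x hx) (Or.inl rfl) (Or.inl rfl)

theorem sum_image_le_aux {α β : Type*} [DecidableEq α] [DecidableEq β] (s : Finset α) (f : α → β) (g : β → ℝ)
    (hg : ∀ b, 0 ≤ g b) : ∑ b ∈ s.image f, g b ≤ ∑ a ∈ s, g (f a) := by
  induction s using Finset.induction_on with
  | empty => simp
  | insert _ _ ha ih =>
    rename_i a s'
    rw [Finset.image_insert, Finset.sum_insert ha]
    rcases em (f a ∈ s'.image f) with h | h
    · rw [Finset.insert_eq_self.mpr h]
      exact le_add_of_nonneg_of_le (hg _) ih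
    · rw [Finset.sum_insert h]
      exact add_le_add le_rfl ih

theorem sSup_sub_sInf_le_diam {T : Set ℝ} (hne : T.Nonempty) (hbd : Bornology.IsBounded T) :
    sSup T - sInf T ≤ Metric.diam T := by
  have hbb := (isBounded_iff_bddBelow_bddAbove.mp hbd)
  have h1 : sSup T ≤ sInf T + Metric.diam T := by
    apply csSup_le hne
    intro x hx
    have h2 : x - Metric.diam T ≤ sInf T := by
      apply le_csInf hne
      intro y hy
      have := Metric.dist_le_diam_of_mem hbd hx hy
      rw [Real.dist_eq] at this
      have := le_abs_self (x - y)
      linarith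
    linarith
  linarith

open MeasureTheory in
/-- lower bound for the Hausdorff measure of `C` -/
theorem hmeas_lower {C : Set ℝ} {Uu : ℕ → Set ℝ} {t s : ℝ} (hc : Ctx C Uu t s) :
    ENNReal.ofReal ((sSup C - sInf C) ^ s) ≤ μH[s] C := by
  classical
  rw [MeasureTheory.Measure.hausdorffMeasure_apply]
  refine le_iSup_of_le 1 (le_iSup_of_le one_pos ?_)
  refine le_iInf fun T => le_iInf fun hcov => le_iInf fun _ => ?_
  -- if some nonempty set in the cover has infinite diameter, the sum is infinite
  by_cases htop : ∃ n, (T n).Nonempty ∧ EMetric.diam (T n) = ⊤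
  · obtain ⟨n, hn, hd⟩ := htop
    have h1 : (⨆ _ : (T n).Nonempty, EMetric.diam (T n) ^ s) = ⊤ := by
      rw [iSup_pos hn, hd, ENNReal.top_rpow_of_pos hc.hs]
    calc ENNReal.ofReal ((sSup C - sInf C) ^ s) ≤ ⊤ := le_top
      _ = ⨆ _ : (T n).Nonempty, EMetric.diam (T n) ^ s := h1.symm
      _ ≤ _ := ENNReal.le_tsum n
  · push_neg at htop
    -- all nonempty members are bounded
    set X := (sSup C - sInf C) ^ s with hX
    have hkey : ∀ ε : ℝ, 0 < ε →
        ENNReal.ofReal (X - 2*ε) ≤ ∑' n, ⨆ _ : (T n).Nonempty, EMetric.diam (T n) ^ s := by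
      intro ε hε
      set δ : ℕ → ℝ := fun n => ((ε * (1/2/2^n)) ^ s⁻¹)/2 with hδ
      have hδpos : ∀ n, 0 < δ n := by
        intro n
        apply div_pos _ two_pos
        apply Real.rpow_pos_of_pos
        positivity
      set I : ℕ → ℝ × ℝ := fun n =>
        if (T n).Nonempty then (sInf (T n) - δ n, sSup (T n) + δ n) else (0, 0) with hI
      have hIcov : C ⊆ ⋃ n, Ioo (I n).1 (I n).2 := by
        intro x hx
        obtain ⟨n, hn⟩ := mem_iUnion.mp (hcov hx)
        have hne : (T n).Nonempty := ⟨x, hn⟩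
        have hbd : Bornology.IsBounded (T n) :=
          Metric.isBounded_iff_ediam_ne_top.mpr (htop n hne)
        obtain ⟨hbb, hba⟩ := isBounded_iff_bddBelow_bddAbove.mp hbd
        refine mem_iUnion.mpr ⟨n, ?_⟩
        simp only [hI, if_pos hne]
        exact ⟨by have := csInf_le hbb hn; linarith [hδpos n],
          by have := le_csSup hba hn; linarith [hδpos n]⟩
      obtain ⟨G, hG⟩ := hc.hcomp.elim_finite_subcover (fun n => Ioo (I n).1 (I n).2)
        (fun n => isOpen_Ioo) hIcov
      have hmain := main_cover hc (G.image I).card (G.image I) le_rfl (by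
        intro x hx
        obtain ⟨n, hnG, hxn⟩ := mem_iUnion₂.mp (hG hx)
        exact ⟨I n, Finset.mem_image_of_mem I hnG, hxn⟩)
      have hstep : ∑ p ∈ G.image I, cost s p ≤ ∑ n ∈ G, cost s (I n) :=
        sum_image_le_aux G I (cost s) (fun _ => cost_nonneg)
      set gR : ℕ → ℝ := fun n =>
        if (T n).Nonempty then Metric.diam (T n) ^ s else 0 with hgR
      have hper : ∀ n, cost s (I n) ≤ gR n + ε * (1/2/2^n) := by
        intro n
        rcases em (T n).Nonempty with hne | hne
        · have hbd : Bornology.IsBounded (T n) :=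
            Metric.isBounded_iff_ediam_ne_top.mpr (htop n hne)
          have hss := sSup_sub_sInf_le_diam hne hbd
          have hdpos : 0 ≤ Metric.diam (T n) := Metric.diam_nonneg
          have h2δ : (2 * δ n) ^ s = ε * (1/2/2^n) := by
            have he : 2 * δ n = (ε * (1/2/2^n)) ^ s⁻¹ := by rw [hδ]; ring
            rw [he, ← Real.rpow_mul (by positivity), inv_mul_cancel₀ hc.hs.ne', Real.rpow_one]
          have hlen : (I n).2 - (I n).1 = (sSup (T n) - sInf (T n)) + 2 * δ n := by
            simp only [hI, if_pos hne]; ring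
          have h1 : cost s (I n) ≤ (Metric.diam (T n) + 2 * δ n) ^ s := by
            apply Real.rpow_le_rpow (le_max_right _ _) _ hc.hs.le
            apply max_le
            · rw [hlen]; linarith
            · linarith [hδpos n]
          have h2 : (Metric.diam (T n) + 2 * δ n) ^ s
              ≤ Metric.diam (T n) ^ s + (2 * δ n) ^ s :=
            subadd hc.hs hc.hs1.le hdpos (by linarith [hδpos n])
          rw [hgR]
          simp only [if_pos hne]
          rw [← h2δ]
          linarith
        · have : I n = (0, 0) := by simp only [hI, if_neg hne]
          rw [hgR]
          simp only [if_neg hne, this]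
          have : cost s ((0:ℝ), (0:ℝ)) = 0 := by
            simp [cost, Real.zero_rpow hc.hs.ne']
          rw [this]
          positivity
      have hgeo : ∑ n ∈ G, ε * (1/2/2^n) ≤ ε * 1 := by
        rw [← Finset.mul_sum]
        apply mul_le_mul_of_nonneg_left _ hε.le
        calc ∑ n ∈ G, (1:ℝ)/2/2^n ≤ ∑' n : ℕ, (1:ℝ)/2/2^n :=
              Summable.sum_le_tsum G (fun n _ => by positivity) (summable_geometric_two' 1)
          _ = 1 := tsum_geometric_two' 1
      have hreal : X - 2*ε ≤ ∑ n ∈ G, gR n := by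
        have h1 : X ≤ ∑ p ∈ G.image I, cost s p := hmain
        have h2 : ∑ n ∈ G, cost s (I n) ≤ ∑ n ∈ G, gR n + ∑ n ∈ G, ε * (1/2/2^n) := by
          rw [← Finset.sum_add_distrib]
          exact Finset.sum_le_sum (fun n _ => hper n)
        linarith [hstep, hgeo]
      calc ENNReal.ofReal (X - 2*ε) ≤ ENNReal.ofReal (∑ n ∈ G, gR n) :=
            ENNReal.ofReal_le_ofReal hreal
        _ = ∑ n ∈ G, ENNReal.ofReal (gR n) := ENNReal.ofReal_sum_of_nonneg (by
            intro n _
            rw [hgR]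
            rcases em (T n).Nonempty with h | h
            · simp only [if_pos h]; exact Real.rpow_nonneg Metric.diam_nonneg _
            · simp only [if_neg h]; exact le_rfl)
        _ ≤ ∑ n ∈ G, ⨆ _ : (T n).Nonempty, EMetric.diam (T n) ^ s := by
            apply Finset.sum_le_sum
            intro n _
            rw [hgR]
            rcases em (T n).Nonempty with h | h
            · simp only [if_pos h]
              rw [iSup_pos h]
              rw [← ENNReal.ofReal_rpow_of_nonneg Metric.diam_nonneg hc.hs.le]
              apply ENNReal.rpow_le_rpow _ hc.hs.le
              rw [Metric.diam]; exact ENNReal.ofReal_toReal_le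
            · simp only [if_neg h, ENNReal.ofReal_zero]; exact zero_le
        _ ≤ ∑' n, ⨆ _ : (T n).Nonempty, EMetric.diam (T n) ^ s := ENNReal.sum_le_tsum G
    -- pass to the limit in ε
    by_contra hlt
    push_neg at hlt
    set M := ∑' n, ⨆ _ : (T n).Nonempty, EMetric.diam (T n) ^ s with hM
    have hMtop : M ≠ ⊤ := hlt.ne_top
    have hX0 : 0 < X := Real.rpow_pos_of_pos (sub_pos.mpr hc.alpha_lt_beta) s
    have hMt : M.toReal < X := (ENNReal.lt_ofReal_iff_toReal_lt hMtop).mp hlt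
    set ε := (X - M.toReal)/4 with hεdef
    have hε : 0 < ε := by rw [hεdef]; linarith
    have hk := hkey ε hε
    rw [ENNReal.ofReal_le_iff_le_toReal hMtop] at hk
    rw [hεdef] at hk
    linarith

end ThickAux

open MeasureTheory in
/-- Lower bound on the Hausdorff dimension of a Cantor set in terms of its thickness. -/
theorem dimH_ge_of_thickness (C : Set ℝ) (hC : IsCantorSet C)
    (h0 : 0 < thickness C) (htop : thickness C ≠ ⊤) :
    ENNReal.ofReal (Real.log 2 / Real.log (2 + 1 / (thickness C).toReal)) ≤ dimH C := by
  obtain ⟨hne, hcomp, hperf, _⟩ := hC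
  set τ' := (thickness C).toReal with hτ'
  have hτ'0 : 0 < τ' := ENNReal.toReal_pos h0.ne' htop
  have hτ'inv : 0 < 1/τ' := by positivity
  set T := Real.log 2 / Real.log (2 + 1/τ') with hT
  have hlog2 : 0 < Real.log 2 := Real.log_pos one_lt_two
  have hbase : (1:ℝ) < 2 + 1/τ' := by linarith
  have hlogb : 0 < Real.log (2 + 1/τ') := Real.log_pos hbase
  have hT0 : 0 < T := div_pos hlog2 hlogb
  apply ENNReal.le_of_forall_nnreal_lt
  intro r hr
  rcases eq_or_ne r 0 with rfl | hr0
  · simp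
  set s : ℝ := (r : ℝ) with hsdef
  have hs0 : 0 < s := NNReal.coe_pos.mpr (pos_iff_ne_zero.mpr hr0)
  have hsT : s < T := by
    rw [← ENNReal.ofReal_coe_nnreal] at hr
    exact (ENNReal.ofReal_lt_ofReal_iff_of_nonneg hs0.le).mp hr
  have hs1 : s < 1 := by
    have h2 : Real.log 2 < Real.log (2 + 1/τ') := Real.log_lt_log two_pos (by linarith)
    have hT1 : T < 1 := by rw [hT, div_lt_one hlogb]; exact h2
    linarith
  have hsl : s * Real.log (2 + 1/τ') < Real.log 2 := by
    have := (lt_div_iff₀ hlogb).mp hsT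
    linarith
  set E := Real.exp (Real.log 2 / s) with hE
  have hEgt : 2 + 1/τ' < E := by
    have h1 : Real.log (2 + 1/τ') < Real.log 2 / s := by
      rw [lt_div_iff₀ hs0]; linarith
    calc 2 + 1/τ' = Real.exp (Real.log (2 + 1/τ')) := (Real.exp_log (by linarith)).symm
      _ < E := Real.exp_lt_exp.mpr h1
  have hE2 : 0 < E - 2 := by linarith
  have hE2' : 1/τ' < E - 2 := by linarith
  have hinv : 1/(E - 2) < τ' := by
    have := one_div_lt_one_div_of_lt hτ'inv hE2'
    rwa [one_div_one_div] at this
  set t' := (1/(E - 2) + τ')/2 with ht'def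
  have hiE2 : 0 < 1/(E - 2) := by positivity
  have ht'pos : 0 < t' := by rw [ht'def]; linarith
  have ht'lt : t' < τ' := by rw [ht'def]; linarith
  have ht'gt : 1/(E - 2) < t' := by rw [ht'def]; linarith
  have hst : (2 + 1/t') ^ s < 2 := by
    have h1 : 1/t' < E - 2 := by
      have := one_div_lt_one_div_of_lt hiE2 ht'gt
      rwa [one_div_one_div] at this
    have h2 : 2 + 1/t' < E := by linarith
    have h2pos : (0:ℝ) < 2 + 1/t' := by positivity
    have h3 : Real.log (2 + 1/t') < Real.log 2 / s := by
      calc Real.log (2 + 1/t') < Real.log E := Real.log_lt_log h2pos h2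
        _ = Real.log 2 / s := Real.log_exp _
    have h4 : Real.log (2 + 1/t') * s < Real.log 2 := (lt_div_iff₀ hs0).mp h3
    calc (2 + 1/t') ^ s = Real.exp (Real.log (2 + 1/t') * s) :=
          Real.rpow_def_of_pos h2pos s
      _ < Real.exp (Real.log 2) := Real.exp_lt_exp.mpr h4
      _ = 2 := Real.exp_log two_pos
  have hoflt : ENNReal.ofReal t' < thickness C := by
    have heq : ENNReal.ofReal τ' = thickness C := ENNReal.ofReal_toReal htop
    rw [← heq]
    exact (ENNReal.ofReal_lt_ofReal_iff_of_nonneg ht'pos.le).mpr ht'lt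
  rw [thickness, lt_iSup_iff] at hoflt
  obtain ⟨Uu, hoflt⟩ := hoflt
  rw [lt_iSup_iff] at hoflt
  obtain ⟨hpres, hofl⟩ := hoflt
  have hth : ∀ n, ∀ u ∈ frontier (Uu n) ∩ C, ENNReal.ofReal t' < gapRatio C Uu n u := by
    intro n u hu
    exact hofl.trans_le ((iInf_le _ n).trans ((iInf_le _ u).trans (iInf_le _ hu)))
  have hctx : ThickAux.Ctx C Uu t' s :=
    ⟨hne, hcomp, hperf, hpres, ht'pos, hth, hs0, hs1, hst.le⟩
  have hmeas := ThickAux.hmeas_lower hctx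
  have hX0 : 0 < (sSup C - sInf C) ^ s :=
    Real.rpow_pos_of_pos (sub_pos.mpr hctx.alpha_lt_beta) s
  have hne0 : μH[s] C ≠ 0 := by
    intro h
    rw [h, nonpos_iff_eq_zero, ENNReal.ofReal_eq_zero] at hmeas
    linarith
  exact le_dimH_of_hausdorffMeasure_ne_zero hne0
end

section
/- If C ⊂ ℝ is a Cantor set with thickness τ(C) ≥ 1, then the sum set C + C = {a + b : a, b ∈ C} contains an interval; in fact, if the convex hull of C is [a,b], then C + C = [2a, 2b]. -/
open Set ENNReal Pointwise

namespace SumsetAux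

/-- An order-theoretic gap of `X`. -/
def OGap (X : Set ℝ) (p q : ℝ) : Prop :=
  p ∈ X ∧ q ∈ X ∧ p < q ∧ Ioo p q ∩ X = ∅

/-- The key regularity property extracted from thickness ≥ 1. -/
structure Spread (X : Set ℝ) : Prop where
  comp : IsCompact X
  nonem : X.Nonempty
  a1 : ∀ p q p' q', OGap X p q → OGap X p' q' → q ≤ p' → min (q - p) (q' - p') ≤ p' - q
  a2l : ∀ p q, OGap X p q → q - p ≤ p - sInf X
  a2r : ∀ p q, OGap X p q → q - p ≤ sSup X - q

lemma gapAround {X : Set ℝ} (hX : IsCompact X) (hne : X.Nonempty) {x : ℝ}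
    (hx : x ∉ X) (h1 : sInf X < x) (h2 : x < sSup X) :
    ∃ p q, OGap X p q ∧ p < x ∧ x < q := by
  have hbel : (X ∩ Iic x).Nonempty := ⟨sInf X, hX.sInf_mem hne, le_of_lt h1⟩
  have habo : (X ∩ Ici x).Nonempty := ⟨sSup X, hX.sSup_mem hne, le_of_lt h2⟩
  have hcb : IsCompact (X ∩ Iic x) := hX.inter_right isClosed_Iic
  have hca : IsCompact (X ∩ Ici x) := hX.inter_right isClosed_Ici
  have hpmem := hcb.sSup_mem hbel
  have hqmem := hca.sInf_mem habo
  set p := sSup (X ∩ Iic x) with hp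
  set q := sInf (X ∩ Ici x) with hq
  have hpx : p < x := lt_of_le_of_ne hpmem.2 (fun h => hx (h ▸ hpmem.1))
  have hxq : x < q := lt_of_le_of_ne (hqmem.2 : x ≤ q) (fun h => hx (h ▸ hqmem.1))
  refine ⟨p, q, ⟨hpmem.1, hqmem.1, hpx.trans hxq, ?_⟩, hpx, hxq⟩
  ext z
  simp only [mem_inter_iff, mem_Ioo, mem_empty_iff_false, iff_false, not_and]
  rintro ⟨hpz, hzq⟩ hzX
  rcases lt_trichotomy z x with h | h | h
  · exact absurd (le_csSup hcb.bddAbove ⟨hzX, le_of_lt h⟩) (not_le.mpr hpz)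
  · exact hx (h ▸ hzX)
  · exact absurd (csInf_le hca.bddBelow ⟨hzX, le_of_lt h⟩) (not_le.mpr hzq)

lemma preconn_le {S : Set ℝ} (hS : IsPreconnected S) {p q u : ℝ} (hpq : p < q)
    (hd : S ∩ Ioo p q = ∅) (hu : u ∈ S) (hup : u ≤ p) : S ⊆ Iic p := by
  intro z hz
  by_contra h
  simp only [mem_Iic, mem_Ici, not_le] at h
  have hmem : ∀ w, w ∈ S → w ∈ Ioo p q → False := by
    intro w hw hw2
    have : w ∈ S ∩ Ioo p q := ⟨hw, hw2⟩
    rw [hd] at this; exact this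
  rcases lt_or_ge z q with hzq | hqz
  · exact hmem z hz ⟨h, hzq⟩
  · have hmid : (p + q) / 2 ∈ Icc u z := ⟨by linarith, by linarith⟩
    exact hmem _ (hS.ordConnected.out hu hz hmid) ⟨by linarith, by linarith⟩

lemma preconn_ge {S : Set ℝ} (hS : IsPreconnected S) {p q u : ℝ} (hpq : p < q)
    (hd : S ∩ Ioo p q = ∅) (hu : u ∈ S) (hup : q ≤ u) : S ⊆ Ici q := by
  intro z hz
  by_contra h
  simp only [mem_Iic, mem_Ici, not_le] at h
  have hmem : ∀ w, w ∈ S → w ∈ Ioo p q → False := by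
    intro w hw hw2
    have : w ∈ S ∩ Ioo p q := ⟨hw, hw2⟩
    rw [hd] at this; exact this
  rcases lt_or_ge p z with hpz | hzp
  · exact hmem z hz ⟨hpz, h⟩
  · have hmid : (p + q) / 2 ∈ Icc z u := ⟨by linarith, by linarith⟩
    exact hmem _ (hS.ordConnected.out hz hu hmid) ⟨by linarith, by linarith⟩

/-- Reflection `x ↦ t - x` of a set. -/
def Nt (t : ℝ) (X : Set ℝ) : Set ℝ := (fun x => t - x) '' X

lemma mem_Nt {t y : ℝ} {X : Set ℝ} : y ∈ Nt t X ↔ t - y ∈ X := by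
  constructor
  · rintro ⟨x, hx, rfl⟩; simpa
  · intro h; exact ⟨t - y, h, by ring⟩

lemma Nt_Nt {t : ℝ} {X : Set ℝ} : Nt t (Nt t X) = X := by
  ext y; simp [mem_Nt]

lemma Nt_compact {t : ℝ} {X : Set ℝ} (h : IsCompact X) : IsCompact (Nt t X) :=
  h.image (by fun_prop)

lemma Nt_nonempty {t : ℝ} {X : Set ℝ} (h : X.Nonempty) : (Nt t X).Nonempty :=
  h.image _

lemma sSup_Nt {t : ℝ} {X : Set ℝ} (hX : IsCompact X) (hne : X.Nonempty) :
    sSup (Nt t X) = t - sInf X := by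
  apply le_antisymm
  · apply csSup_le (Nt_nonempty hne)
    rintro y ⟨x, hx, rfl⟩
    have : sInf X ≤ x := csInf_le hX.bddBelow hx
    simp only; linarith
  · exact le_csSup (Nt_compact hX).bddAbove ⟨sInf X, hX.sInf_mem hne, rfl⟩

lemma sInf_Nt {t : ℝ} {X : Set ℝ} (hX : IsCompact X) (hne : X.Nonempty) :
    sInf (Nt t X) = t - sSup X := by
  apply le_antisymm
  · exact csInf_le (Nt_compact hX).bddBelow ⟨sSup X, hX.sSup_mem hne, rfl⟩
  · apply le_csInf (Nt_nonempty hne)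
    rintro y ⟨x, hx, rfl⟩
    have : x ≤ sSup X := le_csSup hX.bddAbove hx
    simp only; linarith

lemma OGap_Nt_of {t a b : ℝ} {X : Set ℝ} (h : OGap X a b) :
    OGap (Nt t X) (t - b) (t - a) := by
  obtain ⟨ha, hb, hab, hgap⟩ := h
  refine ⟨mem_Nt.mpr (by simpa), mem_Nt.mpr (by simpa), by linarith, ?_⟩
  ext z
  simp only [mem_inter_iff, mem_Ioo, mem_empty_iff_false, iff_false, not_and]
  rintro ⟨h1, h2⟩ hz
  have hz' : t - z ∈ X := mem_Nt.mp hz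
  have : t - z ∈ Ioo a b ∩ X := ⟨⟨by linarith, by linarith⟩, hz'⟩
  rw [hgap] at this; exact this

lemma OGap_Nt {t p q : ℝ} {X : Set ℝ} :
    OGap (Nt t X) p q ↔ OGap X (t - q) (t - p) := by
  constructor
  · intro h
    have := OGap_Nt_of (t := t) h
    rwa [Nt_Nt] at this
  · intro h
    have := OGap_Nt_of (t := t) h
    simpa using this

lemma Spread_Nt {t : ℝ} {X : Set ℝ} (h : Spread X) : Spread (Nt t X) := by
  refine ⟨Nt_compact h.comp, Nt_nonempty h.nonem, ?_, ?_, ?_⟩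
  · intro p q p' q' hg hg' hle
    have h1 := OGap_Nt.mp hg
    have h2 := OGap_Nt.mp hg'
    have := h.a1 _ _ _ _ h2 h1 (by linarith)
    rw [min_comm] at this
    have e1 : t - p' - (t - q') = q' - p' := by ring
    have e2 : t - p - (t - q) = q - p := by ring
    have e3 : t - q - (t - p') = p' - q := by ring
    rw [e1, e2, e3] at this
    exact this
  · intro p q hg
    have h1 := OGap_Nt.mp hg
    have := h.a2r _ _ h1
    rw [sInf_Nt h.comp h.nonem]
    linarith
  · intro p q hg
    have h1 := OGap_Nt.mp hg
    have := h.a2l _ _ h1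
    rw [sSup_Nt h.comp h.nonem]
    linarith

/-- Linked pair of gaps: a gap of `X` on the left interleaved with a gap of `Y`. -/
def Linked (X Y : Set ℝ) : Prop :=
  ∃ p1 q1 p2 q2, OGap X p1 p2 ∧ OGap Y q1 q2 ∧ p1 < q1 ∧ q1 < p2 ∧ p2 < q2

lemma Linked_Nt {t : ℝ} {X Y : Set ℝ} (h : Linked X Y) : Linked (Nt t Y) (Nt t X) := by
  obtain ⟨p1, q1, p2, q2, hU, hV, h1, h2, h3⟩ := h
  exact ⟨t - q2, t - p2, t - q1, t - p1, OGap_Nt_of hV, OGap_Nt_of hU,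
    by linarith, by linarith, by linarith⟩

lemma finite_sep {S : Set ℝ} {δ lo hi : ℝ} (hδ : 0 < δ) (hS : S ⊆ Icc lo hi)
    (hsep : ∀ x ∈ S, ∀ y ∈ S, x ≠ y → δ ≤ |x - y|) : S.Finite := by
  have hinj : Set.InjOn (fun x => ⌊(x - lo) / δ⌋) S := by
    intro x hx y hy hxy
    by_contra hne
    have h1 := hsep x hx y hy hne
    simp only at hxy
    have hx1 : (x - lo) / δ < ⌊(x - lo) / δ⌋ + 1 := Int.lt_floor_add_one _
    have hx2 : (⌊(x - lo) / δ⌋ : ℝ) ≤ (x - lo) / δ := Int.floor_le _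
    have hy1 : (y - lo) / δ < ⌊(y - lo) / δ⌋ + 1 := Int.lt_floor_add_one _
    have hy2 : (⌊(y - lo) / δ⌋ : ℝ) ≤ (y - lo) / δ := Int.floor_le _
    rw [hxy] at hx1 hx2
    have e0 : (x - y) / δ = (x - lo) / δ - (y - lo) / δ := by ring
    have e0' : (y - x) / δ = (y - lo) / δ - (x - lo) / δ := by ring
    have d1 : (x - y) / δ < 1 := by rw [e0]; linarith
    have d2 : (y - x) / δ < 1 := by rw [e0']; linarith
    have d1' : x - y < δ := by have := (div_lt_one hδ).mp d1; linarith
    have d2' : y - x < δ := by have := (div_lt_one hδ).mp d2; linarith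
    have : |x - y| < δ := abs_sub_lt_iff.mpr ⟨d1', d2'⟩
    linarith
  have himg : (fun x => ⌊(x - lo) / δ⌋) '' S ⊆ Icc 0 ⌊(hi - lo) / δ⌋ := by
    rintro k ⟨x, hx, rfl⟩
    obtain ⟨hx1, hx2⟩ := hS hx
    constructor
    · exact Int.floor_nonneg.mpr (div_nonneg (by linarith) hδ.le)
    · exact Int.floor_le_floor (by gcongr)
  exact Set.Finite.of_finite_image ((Set.finite_Icc _ _).subset himg) hinj

/-- Pairs of gap endpoints of `X` or `Y` with length in `(δ, m)`. -/
def GS (δ : ℝ) (X Y : Set ℝ) (m : ℝ) : Set (ℝ × ℝ) :=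
  {pq | (OGap X pq.1 pq.2 ∨ OGap Y pq.1 pq.2) ∧ δ < pq.2 - pq.1 ∧ pq.2 - pq.1 < m}

lemma GS_comm {δ m : ℝ} {X Y : Set ℝ} : GS δ X Y m = GS δ Y X m := by
  ext pq; simp only [GS, mem_setOf_eq]; tauto

lemma GS_mono {δ m m' : ℝ} {X Y : Set ℝ} (h : m ≤ m') : GS δ X Y m ⊆ GS δ X Y m' := by
  rintro pq ⟨h1, h2, h3⟩; exact ⟨h1, h2, lt_of_lt_of_le h3 h⟩

lemma GS_finite {δ m : ℝ} (hδ : 0 < δ) {X Y : Set ℝ} (hX : Spread X) (hY : Spread Y)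
    (hsep : ∀ x ∈ X, ∀ y ∈ Y, δ ≤ |x - y|) : (GS δ X Y m).Finite := by
  set lo := min (sInf X) (sInf Y)
  set hi := max (sSup X) (sSup Y)
  have hdisj : ∀ z, z ∈ X → z ∈ Y → False := by
    intro z h1 h2
    have := hsep z h1 z h2; simp at this; linarith
  -- key separation fact on pairs of gaps
  have hkey : ∀ pq ∈ GS δ X Y m, ∀ pq' ∈ GS δ X Y m, pq.1 = pq'.1 → pq = pq' := by
    rintro ⟨p, q⟩ ⟨hor, hs, _⟩ ⟨p', q'⟩ ⟨hor', hs', _⟩ h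
    simp only at h
    subst h
    simp only [Prod.mk.injEq, true_and]
    by_contra hne
    rcases lt_or_gt_of_ne hne with hlt | hlt
    · rcases hor with hg | hg <;> rcases hor' with hg' | hg'
      · have : q ∈ Ioo p q' ∩ X := ⟨⟨hg.2.2.1, hlt⟩, hg.2.1⟩
        rw [hg'.2.2.2] at this; exact this
      · exact hdisj p hg.1 hg'.1
      · exact hdisj p hg'.1 hg.1
      · have : q ∈ Ioo p q' ∩ Y := ⟨⟨hg.2.2.1, hlt⟩, hg.2.1⟩
        rw [hg'.2.2.2] at this; exact this
    · rcases hor with hg | hg <;> rcases hor' with hg' | hg'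
      · have : q' ∈ Ioo p q ∩ X := ⟨⟨hg'.2.2.1, hlt⟩, hg'.2.1⟩
        rw [hg.2.2.2] at this; exact this
      · exact hdisj p hg.1 hg'.1
      · exact hdisj p hg'.1 hg.1
      · have : q' ∈ Ioo p q ∩ Y := ⟨⟨hg'.2.2.1, hlt⟩, hg'.2.1⟩
        rw [hg.2.2.2] at this; exact this
  have hsepF : ∀ x ∈ Prod.fst '' GS δ X Y m, ∀ y ∈ Prod.fst '' GS δ X Y m,
      x ≠ y → δ ≤ |x - y| := by
    rintro x ⟨⟨p, q⟩, hpq, rfl⟩ y ⟨⟨p', q'⟩, hpq', rfl⟩ hne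
    simp only at hne ⊢
    obtain ⟨hor, hs, _⟩ := hpq
    obtain ⟨hor', hs', _⟩ := hpq'
    have hgen : ∀ a b a' b' : ℝ, ∀ Z : Set ℝ, OGap Z a b → OGap Z a' b' → a < a' →
        δ < b - a → a' - a ≥ b - a := by
      intro a b a' b' Z hg hg' hlt hs
      by_contra hc
      push_neg at hc
      have : a' ∈ Ioo a b ∩ Z := ⟨⟨hlt, by linarith⟩, hg'.1⟩
      rw [hg.2.2.2] at this; exact this
    rcases hor with hg | hg <;> rcases hor' with hg' | hg'
    · rcases lt_or_gt_of_ne hne with h | h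
      · have := hgen _ _ _ _ _ hg hg' h hs
        rw [abs_sub_comm, abs_of_nonneg (by linarith)]; linarith
      · have := hgen _ _ _ _ _ hg' hg h hs'
        rw [abs_of_nonneg (by linarith)]; linarith
    · have := hsep p hg.1 p' hg'.1; exact this
    · have := hsep p' hg'.1 p hg.1; rwa [abs_sub_comm] at this
    · rcases lt_or_gt_of_ne hne with h | h
      · have := hgen _ _ _ _ _ hg hg' h hs
        rw [abs_sub_comm, abs_of_nonneg (by linarith)]; linarith
      · have := hgen _ _ _ _ _ hg' hg h hs'
        rw [abs_of_nonneg (by linarith)]; linarith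
  have hbd : Prod.fst '' GS δ X Y m ⊆ Icc lo hi := by
    rintro x ⟨⟨p, q⟩, ⟨hor, _, _⟩, rfl⟩
    rcases hor with hg | hg
    · exact ⟨le_trans (min_le_left _ _) (csInf_le hX.comp.bddBelow hg.1),
        le_trans (le_csSup hX.comp.bddAbove hg.1) (le_max_left _ _)⟩
    · exact ⟨le_trans (min_le_right _ _) (csInf_le hY.comp.bddBelow hg.1),
        le_trans (le_csSup hY.comp.bddAbove hg.1) (le_max_right _ _)⟩
  have hfstfin : (Prod.fst '' GS δ X Y m).Finite := finite_sep hδ hbd hsepF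
  apply Set.Finite.of_finite_image hfstfin
  intro pq h1 pq' h2 h
  exact hkey pq h1 pq' h2 h

lemma GS_ncard_Nt {δ m : ℝ} {X Y : Set ℝ} :
    (GS δ (Nt 0 Y) (Nt 0 X) m).ncard = (GS δ X Y m).ncard := by
  have hinj : Function.Injective (fun pq : ℝ × ℝ => (0 - pq.2, 0 - pq.1)) := by
    rintro ⟨a, b⟩ ⟨c, d⟩ h
    simp only [Prod.mk.injEq] at h ⊢
    constructor <;> linarith [h.1, h.2]
  have heq : GS δ (Nt 0 Y) (Nt 0 X) m = (fun pq : ℝ × ℝ => (0 - pq.2, 0 - pq.1)) '' GS δ X Y m := by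
    ext ⟨p, q⟩
    simp only [GS, mem_setOf_eq, mem_image, Prod.mk.injEq, Prod.exists]
    constructor
    · rintro ⟨hor, h1, h2⟩
      refine ⟨0 - q, 0 - p, ⟨?_, by linarith, by linarith⟩, by ring, by ring⟩
      rcases hor with hg | hg
      · exact Or.inr (by simpa using OGap_Nt.mp hg)
      · exact Or.inl (by simpa using OGap_Nt.mp hg)
    · rintro ⟨a, b, ⟨hor, h1, h2⟩, hb, ha⟩
      subst hb; subst ha
      refine ⟨?_, by linarith, by linarith⟩
      rcases hor with hg | hg
      · exact Or.inr (OGap_Nt_of hg)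
      · exact Or.inl (OGap_Nt_of hg)
  rw [heq, Set.ncard_image_of_injective _ hinj]

lemma step {δ : ℝ} (hδ : 0 < δ) {X Y : Set ℝ} (hX : Spread X) (hY : Spread Y)
    (hsep : ∀ x ∈ X, ∀ y ∈ Y, δ ≤ |x - y|)
    {p1 q1 p2 q2 : ℝ} (hU : OGap X p1 p2) (hV : OGap Y q1 q2)
    (h1 : p1 < q1) (h2 : q1 < p2) (h3 : p2 < q2) (hbig : q2 - q1 ≤ p2 - p1) :
    ∃ p' q', OGap X p' q' ∧ q1 < p' ∧ p' < q2 ∧ q2 < q' ∧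
      q' - p' < q2 - q1 ∧ δ < q' - p' := by
  obtain ⟨hp1X, hp2X, hUlt, hUem⟩ := hU
  have hbX : p2 - p1 ≤ sSup X - p2 := hX.a2r _ _ ⟨hp1X, hp2X, hUlt, hUem⟩
  have hq2b : q2 < sSup X := by linarith
  have hq2X : q2 ∉ X := by
    intro h
    have := hsep q2 h q2 hV.2.1
    simp at this; linarith
  have hq2a : sInf X < q2 := lt_of_le_of_lt (csInf_le hX.comp.bddBelow hp1X) (by linarith)
  obtain ⟨p', q', hU', hpq2, hq2q⟩ := gapAround hX.comp hX.nonem hq2X hq2a hq2b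
  have hp2p' : p2 ≤ p' := by
    by_contra hc
    push_neg at hc
    have : p2 ∈ Ioo p' q' ∩ X := ⟨⟨hc, by linarith⟩, hp2X⟩
    rw [hU'.2.2.2] at this; exact this
  have hmin := hX.a1 _ _ _ _ ⟨hp1X, hp2X, hUlt, hUem⟩ hU' hp2p'
  have hsize : q' - p' < q2 - q1 := by
    rcases le_total (p2 - p1) (q' - p') with hle | hle
    · rw [min_eq_left hle] at hmin; linarith
    · rw [min_eq_right hle] at hmin; linarith
  have hδs : δ < q' - p' := by
    have := hsep p' hU'.1 q2 hV.2.1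
    rw [abs_sub_comm, abs_of_nonneg (by linarith)] at this
    linarith
  exact ⟨p', q', hU', by linarith, hpq2, hq2q, hsize, hδs⟩

lemma descend {δ : ℝ} (hδ : 0 < δ) {X Y : Set ℝ} (hX : Spread X) (hY : Spread Y)
    (hsep : ∀ x ∈ X, ∀ y ∈ Y, δ ≤ |x - y|)
    {p1 q1 p2 q2 : ℝ} (hU : OGap X p1 p2) (hV : OGap Y q1 q2)
    (h1 : p1 < q1) (h2 : q1 < p2) (h3 : p2 < q2) (hbig : q2 - q1 ≤ p2 - p1) :
    ∃ p1' q1' p2' q2' : ℝ, OGap Y p1' p2' ∧ OGap X q1' q2' ∧ p1' < q1' ∧ q1' < p2' ∧ p2' < q2' ∧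
      (GS δ Y X (min (p2' - p1') (q2' - q1'))).ncard + 1 ≤
        (GS δ X Y (min (p2 - p1) (q2 - q1))).ncard := by
  obtain ⟨p', q', hU', ha, hb, hc, hsize, hδs⟩ := step hδ hX hY hsep hU hV h1 h2 h3 hbig
  refine ⟨q1, p', q2, q', hV, hU', ha, hb, hc, ?_⟩
  have hminnew : min (q2 - q1) (q' - p') = q' - p' := min_eq_right (by linarith)
  have hnotmem : (p', q') ∉ GS δ X Y (q' - p') := by
    rintro ⟨-, -, hᵣ⟩
    simp only at hᵣ; linarith
  have hmem : (p', q') ∈ GS δ X Y (min (p2 - p1) (q2 - q1)) :=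
    ⟨Or.inl hU', hδs, lt_min (by linarith) hsize⟩
  have hsub : insert (p', q') (GS δ X Y (q' - p')) ⊆ GS δ X Y (min (p2 - p1) (q2 - q1)) := by
    apply insert_subset hmem
    apply GS_mono
    rw [le_min_iff]
    constructor <;> linarith
  have hfin : (GS δ X Y (min (p2 - p1) (q2 - q1))).Finite := GS_finite hδ hX hY hsep
  have hfin' : (GS δ X Y (q' - p')).Finite := hfin.subset (hsub.trans' (subset_insert _ _))
  calc (GS δ Y X (min (q2 - q1) (q' - p'))).ncard + 1
      = (GS δ X Y (q' - p')).ncard + 1 := by rw [hminnew, GS_comm]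
    _ = (insert (p', q') (GS δ X Y (q' - p'))).ncard := (Set.ncard_insert_of_notMem hnotmem hfin').symm
    _ ≤ (GS δ X Y (min (p2 - p1) (q2 - q1))).ncard := Set.ncard_le_ncard hsub hfin

lemma chase {δ : ℝ} (hδ : 0 < δ) :
    ∀ n : ℕ, ∀ X Y : Set ℝ, Spread X → Spread Y →
      (∀ x ∈ X, ∀ y ∈ Y, δ ≤ |x - y|) →
      ∀ p1 q1 p2 q2 : ℝ, OGap X p1 p2 → OGap Y q1 q2 → p1 < q1 → q1 < p2 → p2 < q2 →
      (GS δ X Y (min (p2 - p1) (q2 - q1))).ncard ≤ n → False := by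
  intro n
  induction n with
  | zero =>
    intro X Y hX hY hsep p1 q1 p2 q2 hU hV h1 h2 h3 hcard
    rcases le_or_gt (q2 - q1) (p2 - p1) with hbig | hbig
    · obtain ⟨_, _, _, _, _, _, _, _, _, hle⟩ := descend hδ hX hY hsep hU hV h1 h2 h3 hbig
      omega
    · have hsep' : ∀ x ∈ Nt 0 Y, ∀ y ∈ Nt 0 X, δ ≤ |x - y| := by
        intro x hx y hy
        have := hsep (0 - y) (mem_Nt.mp hy) (0 - x) (mem_Nt.mp hx)
        rwa [show (0:ℝ) - y - (0 - x) = x - y by ring] at this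
      obtain ⟨a, b, c, d, hU', hV', g1, g2, g3, hle⟩ :=
        descend hδ (Spread_Nt hY) (Spread_Nt hX) hsep'
          (OGap_Nt_of hV) (OGap_Nt_of hU)
          (by linarith) (by linarith) (by linarith) (by linarith)
      have hmm : min ((0:ℝ) - q1 - (0 - q2)) ((0:ℝ) - p1 - (0 - p2)) = min (p2 - p1) (q2 - q1) := by
        rw [show (0:ℝ) - q1 - (0 - q2) = q2 - q1 by ring,
          show (0:ℝ) - p1 - (0 - p2) = p2 - p1 by ring, min_comm]
      rw [hmm, GS_ncard_Nt (X := X) (Y := Y)] at hle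
      omega
  | succ n ih =>
    intro X Y hX hY hsep p1 q1 p2 q2 hU hV h1 h2 h3 hcard
    rcases le_or_gt (q2 - q1) (p2 - p1) with hbig | hbig
    · obtain ⟨a, b, c, d, hU', hV', g1, g2, g3, hle⟩ := descend hδ hX hY hsep hU hV h1 h2 h3 hbig
      exact ih Y X hY hX (fun y hy x hx => abs_sub_comm x y ▸ hsep x hx y hy)
        a b c d hU' hV' g1 g2 g3 (by omega)
    · have hsep' : ∀ x ∈ Nt 0 Y, ∀ y ∈ Nt 0 X, δ ≤ |x - y| := by
        intro x hx y hy
        have := hsep (0 - y) (mem_Nt.mp hy) (0 - x) (mem_Nt.mp hx)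
        rwa [show (0:ℝ) - y - (0 - x) = x - y by ring] at this
      obtain ⟨a, b, c, d, hU', hV', g1, g2, g3, hle⟩ :=
        descend hδ (Spread_Nt hY) (Spread_Nt hX) hsep'
          (OGap_Nt_of hV) (OGap_Nt_of hU)
          (by linarith) (by linarith) (by linarith) (by linarith)
      have hmm : min ((0:ℝ) - q1 - (0 - q2)) ((0:ℝ) - p1 - (0 - p2)) = min (p2 - p1) (q2 - q1) := by
        rw [show (0:ℝ) - q1 - (0 - q2) = q2 - q1 by ring,
          show (0:ℝ) - p1 - (0 - p2) = p2 - p1 by ring, min_comm]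
      rw [hmm, GS_ncard_Nt (X := X) (Y := Y)] at hle
      exact ih (Nt 0 X) (Nt 0 Y) (Spread_Nt hX) (Spread_Nt hY)
        (fun x hx y hy => abs_sub_comm y x ▸ hsep' y hy x hx)
        a b c d hU' hV' g1 g2 g3 (by omega)

section LemmaA

lemma mem_cHull {C : Set ℝ} (hcomp : IsCompact C) {z : ℝ} (hz : z ∈ C) : z ∈ cHull C :=
  ⟨csInf_le hcomp.bddBelow hz, le_csSup hcomp.bddAbove hz⟩

lemma hull_diff_eq {C : Set ℝ} (hcomp : IsCompact C) (hne : C.Nonempty) :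
    cHull C \ C = Ioo (sInf C) (sSup C) ∩ Cᶜ := by
  ext z
  constructor
  · rintro ⟨⟨h1, h2⟩, h3⟩
    refine ⟨⟨lt_of_le_of_ne h1 ?_, lt_of_le_of_ne h2 ?_⟩, h3⟩
    · intro h; exact h3 (h ▸ hcomp.sInf_mem hne)
    · intro h; exact h3 (h ▸ hcomp.sSup_mem hne)
  · rintro ⟨⟨h1, h2⟩, h3⟩
    exact ⟨⟨h1.le, h2.le⟩, h3⟩

lemma hull_diff_open {C : Set ℝ} (hcomp : IsCompact C) (hne : C.Nonempty) :
    IsOpen (cHull C \ C) := by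
  rw [hull_diff_eq hcomp hne]
  exact isOpen_Ioo.inter hcomp.isClosed.isOpen_compl

lemma isGap_of_OGap {C : Set ℝ} (hcomp : IsCompact C) {p q : ℝ} (hg : OGap C p q) :
    IsGap C (Ioo p q) := by
  obtain ⟨hpC, hqC, hpq, hem⟩ := hg
  set x := (p + q) / 2 with hx
  have hxIoo : x ∈ Ioo p q := ⟨by simp only [hx]; linarith, by simp only [hx]; linarith⟩
  have hIoosub : Ioo p q ⊆ cHull C \ C := by
    intro z hz
    refine ⟨⟨le_trans (csInf_le hcomp.bddBelow hpC) hz.1.le,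
      le_trans hz.2.le (le_csSup hcomp.bddAbove hqC)⟩, ?_⟩
    intro hzC
    have : z ∈ Ioo p q ∩ C := ⟨hz, hzC⟩
    rw [hem] at this; exact this
  have hxF : x ∈ cHull C \ C := hIoosub hxIoo
  refine ⟨x, hxF, ?_⟩
  apply Subset.antisymm
  · exact isPreconnected_Ioo.subset_connectedComponentIn hxIoo hIoosub
  · intro z hz
    have hord := isPreconnected_connectedComponentIn
      (F := cHull C \ C) (x := x) |>.ordConnected
    constructor
    · by_contra h
      push_neg at h
      have : p ∈ connectedComponentIn (cHull C \ C) x :=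
        hord.out hz (mem_connectedComponentIn hxF) ⟨h, hxIoo.1.le⟩
      exact (connectedComponentIn_subset _ _ this).2 hpC
    · by_contra h
      push_neg at h
      have : q ∈ connectedComponentIn (cHull C \ C) x :=
        hord.out (mem_connectedComponentIn hxF) hz ⟨hxIoo.2.le, h⟩
      exact (connectedComponentIn_subset _ _ this).2 hqC

lemma OGap_of_isGap {C : Set ℝ} (hcomp : IsCompact C) (hne : C.Nonempty)
    {U : Set ℝ} (hU : IsGap C U) : ∃ p q, OGap C p q ∧ U = Ioo p q := by
  obtain ⟨x, hx, rfl⟩ := hU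
  set F := cHull C \ C with hF
  have hFopen : IsOpen F := hull_diff_open hcomp hne
  set S := connectedComponentIn F x with hS
  have hSopen : IsOpen S := hFopen.connectedComponentIn
  have hxS : x ∈ S := mem_connectedComponentIn hx
  have hSsub : S ⊆ Ioo (sInf C) (sSup C) := by
    intro z hz
    have := connectedComponentIn_subset F x hz
    rw [hF, hull_diff_eq hcomp hne] at this
    exact this.1
  have hSC : ∀ z ∈ S, z ∉ C := fun z hz => (connectedComponentIn_subset F x hz).2
  have hSne : S.Nonempty := ⟨x, hxS⟩
  have hbdd : BddAbove S := bddAbove_Ioo.mono hSsub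
  have hbddb : BddBelow S := bddBelow_Ioo.mono hSsub
  set p := sInf S with hp
  set q := sSup S with hq
  have hpq : ∀ z ∈ S, p ≤ z ∧ z ≤ q := fun z hz => ⟨csInf_le hbddb hz, le_csSup hbdd hz⟩
  have hpS : p ∉ S := by
    intro h
    obtain ⟨ε, hε, hball⟩ := Metric.isOpen_iff.mp hSopen p h
    have : p - ε / 2 ∈ S := hball (by rw [Metric.mem_ball, Real.dist_eq, abs_of_nonpos] <;> linarith)
    linarith [(hpq _ this).1]
  have hqS : q ∉ S := by
    intro h
    obtain ⟨ε, hε, hball⟩ := Metric.isOpen_iff.mp hSopen q h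
    have : q + ε / 2 ∈ S := hball (by rw [Metric.mem_ball, Real.dist_eq, abs_of_nonneg] <;> linarith)
    linarith [(hpq _ this).2]
  have hSIoo : S = Ioo p q := by
    apply Subset.antisymm
    · intro z hz
      obtain ⟨h1, h2⟩ := hpq z hz
      exact ⟨lt_of_le_of_ne h1 (fun h => hpS (h ▸ hz)), lt_of_le_of_ne h2 (fun h => hqS (h ▸ hz))⟩
    · intro z hz
      obtain ⟨u, hu, huz⟩ := exists_lt_of_csInf_lt hSne hz.1
      obtain ⟨w, hw, hzw⟩ := exists_lt_of_lt_csSup hSne hz.2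
      exact (isPreconnected_connectedComponentIn.ordConnected).out hu hw ⟨huz.le, hzw.le⟩
  have hplq : p < q := by
    have := hxS
    rw [hSIoo] at this; exact this.1.trans this.2
  have hle1 : sInf C ≤ p := le_csInf hSne (fun z hz => (hSsub hz).1.le)
  have hle2 : q ≤ sSup C := csSup_le hSne (fun z hz => (hSsub hz).2.le)
  have hkey : ∀ y, y ∈ closure S → y ∉ S → y ∈ Ioo (sInf C) (sSup C) → y ∈ C := by
    intro y hyclos hyS hyIoo
    by_contra hyC
    have hyF : y ∈ F := by
      rw [hF, hull_diff_eq hcomp hne]; exact ⟨hyIoo, hyC⟩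
    have hT : IsPreconnected (insert y S) :=
      isPreconnected_connectedComponentIn.subset_closure (subset_insert _ _)
        (insert_subset hyclos subset_closure)
    have : insert y S ⊆ S :=
      hT.subset_connectedComponentIn (mem_insert_iff.mpr (Or.inr hxS))
        (insert_subset hyF (connectedComponentIn_subset F x))
    exact hyS (this (mem_insert _ _))
  have hpC : p ∈ C := by
    rcases eq_or_lt_of_le hle1 with h | h
    · exact h ▸ hcomp.sInf_mem hne
    · exact hkey p (csInf_mem_closure hSne hbddb) hpS ⟨h, lt_of_lt_of_le hplq hle2⟩
  have hqC : q ∈ C := by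
    rcases eq_or_lt_of_le hle2 with h | h
    · exact h.symm ▸ hcomp.sSup_mem hne
    · exact hkey q (csSup_mem_closure hSne hbdd) hqS ⟨lt_of_le_of_lt hle1 hplq, h⟩
  refine ⟨p, q, ⟨hpC, hqC, hplq, ?_⟩, hSIoo ▸ rfl⟩
  rw [← hSIoo]
  ext z
  simp only [mem_inter_iff, mem_empty_iff_false, iff_false, not_and]
  exact fun hz => hSC z hz

lemma exists_pres {C : Set ℝ} (hτ : 1 ≤ thickness C) {ε : ℝ} (hε1 : 0 < ε) (hε2 : ε < 1) :
    ∃ P, IsPresentation C P ∧ ∀ n u, u ∈ frontier (P n) ∩ C →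
      ENNReal.ofReal (1 - ε) ≤ gapRatio C P n u := by
  have h1 : ENNReal.ofReal (1 - ε) < thickness C :=
    lt_of_lt_of_le (ENNReal.ofReal_lt_one.mpr (by linarith)) hτ
  rw [thickness, lt_iSup_iff] at h1
  obtain ⟨P, h1⟩ := h1
  rw [lt_iSup_iff] at h1
  obtain ⟨hP, h1⟩ := h1
  refine ⟨P, hP, fun n u hu => ?_⟩
  refine h1.le.trans (le_trans (iInf_le _ n) (le_trans (iInf_le _ u) (iInf_le _ hu)))

lemma diam_bridge_ge {C : Set ℝ} {P : ℕ → Set ℝ} {n : ℕ} {p q u ε : ℝ}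
    (hPn : P n = Ioo p q) (hpq : p < q) (hε : ε < 1)
    (hrat : ENNReal.ofReal (1 - ε) ≤ gapRatio C P n u) :
    (1 - ε) * (q - p) ≤ Metric.diam (bridge C P n u) := by
  unfold gapRatio at hrat
  rw [hPn, Real.diam_Ioo hpq.le] at hrat
  rw [ENNReal.le_div_iff_mul_le
    (Or.inl (ne_of_gt (ENNReal.ofReal_pos.mpr (by linarith))))
    (Or.inl ENNReal.ofReal_ne_top)] at hrat
  rw [← ENNReal.ofReal_mul (by linarith)] at hrat
  exact (ENNReal.ofReal_le_ofReal_iff Metric.diam_nonneg).mp hrat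

lemma mem_hull_minus {C : Set ℝ} (hcomp : IsCompact C) (hne : C.Nonempty) {P : ℕ → Set ℝ}
    (hP : IsPresentation C P) (n : ℕ) {u : ℝ} (hu : u ∈ C) :
    u ∈ cHull C \ ⋃ i ∈ Finset.range (n + 1), P i := by
  refine ⟨mem_cHull hcomp hu, ?_⟩
  intro hmem
  simp only [mem_iUnion, exists_prop] at hmem
  obtain ⟨i, _, hui⟩ := hmem
  obtain ⟨p, q, hg, hIoo⟩ := OGap_of_isGap hcomp hne (hP.1 i)
  rw [hIoo] at hui
  have : u ∈ Ioo p q ∩ C := ⟨hui, hu⟩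
  rw [hg.2.2.2] at this; exact this

lemma bridge_inter_empty {C : Set ℝ} {P : ℕ → Set ℝ} {n m : ℕ} (hm : m ≤ n) {p q u : ℝ}
    (hPm : P m = Ioo p q) : bridge C P n u ∩ Ioo p q = ∅ := by
  ext z
  simp only [mem_inter_iff, mem_empty_iff_false, iff_false, not_and]
  intro hz hzIoo
  have hz2 := connectedComponentIn_subset _ _ hz
  apply hz2.2
  exact Set.mem_biUnion (Finset.mem_range.mpr (Nat.lt_succ_of_le hm)) (hPm ▸ hzIoo : z ∈ P m)

lemma bridge_subset_Iic {C : Set ℝ} (hcomp : IsCompact C) (hne : C.Nonempty) {P : ℕ → Set ℝ}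
    (hP : IsPresentation C P) {n m : ℕ} (hm : m ≤ n) {p q u : ℝ}
    (hPm : P m = Ioo p q) (hpq : p < q) (hu : u ∈ C) (hup : u ≤ p) :
    bridge C P n u ⊆ Iic p :=
  preconn_le isPreconnected_connectedComponentIn hpq (bridge_inter_empty hm hPm)
    (mem_connectedComponentIn (mem_hull_minus hcomp hne hP n hu)) hup

lemma bridge_subset_Ici {C : Set ℝ} (hcomp : IsCompact C) (hne : C.Nonempty) {P : ℕ → Set ℝ}
    (hP : IsPresentation C P) {n m : ℕ} (hm : m ≤ n) {p q u : ℝ}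
    (hPm : P m = Ioo p q) (hpq : p < q) (hu : u ∈ C) (hup : q ≤ u) :
    bridge C P n u ⊆ Ici q :=
  preconn_ge isPreconnected_connectedComponentIn hpq (bridge_inter_empty hm hPm)
    (mem_connectedComponentIn (mem_hull_minus hcomp hne hP n hu)) hup

lemma bridge_subset_hull {C : Set ℝ} {P : ℕ → Set ℝ} {n : ℕ} {u : ℝ} :
    bridge C P n u ⊆ Icc (sInf C) (sSup C) :=
  fun z hz => (connectedComponentIn_subset _ _ hz).1

lemma diam_le_of_subset_Icc {S : Set ℝ} {l r : ℝ} (h : S ⊆ Icc l r) (hlr : l ≤ r) :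
    Metric.diam S ≤ r - l :=
  le_trans (Metric.diam_mono h (Metric.isBounded_Icc l r)) (le_of_eq (Real.diam_Icc hlr))

lemma frontier_mem_left {C : Set ℝ} {P : ℕ → Set ℝ} {n : ℕ} {p q : ℝ}
    (hPn : P n = Ioo p q) (hpq : p < q) (hp : p ∈ C) : p ∈ frontier (P n) ∩ C := by
  rw [hPn, frontier_Ioo hpq]
  exact ⟨mem_insert _ _, hp⟩

lemma frontier_mem_right {C : Set ℝ} {P : ℕ → Set ℝ} {n : ℕ} {p q : ℝ}
    (hPn : P n = Ioo p q) (hpq : p < q) (hq : q ∈ C) : q ∈ frontier (P n) ∩ C := by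
  rw [hPn, frontier_Ioo hpq]
  exact ⟨mem_insert_iff.mpr (Or.inr rfl), hq⟩

lemma eps_a1 {C : Set ℝ} (hcomp : IsCompact C) (hne : C.Nonempty) (hτ : 1 ≤ thickness C)
    {p q p' q' : ℝ} (hg : OGap C p q) (hg' : OGap C p' q') (hle : q ≤ p')
    {ε : ℝ} (hε1 : 0 < ε) (hε2 : ε < 1) :
    (1 - ε) * min (q - p) (q' - p') ≤ p' - q := by
  obtain ⟨P, hP, hrat⟩ := exists_pres hτ hε1 hε2
  obtain ⟨nn, hnn⟩ := hP.2.2 _ (isGap_of_OGap hcomp hg)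
  obtain ⟨mm, hmm⟩ := hP.2.2 _ (isGap_of_OGap hcomp hg')
  have hε0 : (0:ℝ) ≤ 1 - ε := by linarith
  rcases le_total mm nn with hcmp | hcmp
  · have hd := diam_bridge_ge hnn hg.2.2.1 hε2
      (hrat nn q (frontier_mem_right hnn hg.2.2.1 hg.2.1))
    have hs1 : bridge C P nn q ⊆ Ici q :=
      bridge_subset_Ici hcomp hne hP le_rfl hnn hg.2.2.1 hg.2.1 le_rfl
    have hs2 : bridge C P nn q ⊆ Iic p' :=
      bridge_subset_Iic hcomp hne hP hcmp hmm hg'.2.2.1 hg.2.1 hle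
    have hdle : Metric.diam (bridge C P nn q) ≤ p' - q :=
      diam_le_of_subset_Icc (fun z hz => ⟨hs1 hz, hs2 hz⟩) hle
    calc (1 - ε) * min (q - p) (q' - p') ≤ (1 - ε) * (q - p) :=
          mul_le_mul_of_nonneg_left (min_le_left _ _) hε0
      _ ≤ _ := le_trans hd hdle
  · have hd := diam_bridge_ge hmm hg'.2.2.1 hε2
      (hrat mm p' (frontier_mem_left hmm hg'.2.2.1 hg'.1))
    have hs1 : bridge C P mm p' ⊆ Ici q :=
      bridge_subset_Ici hcomp hne hP hcmp hnn hg.2.2.1 hg'.1 hle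
    have hs2 : bridge C P mm p' ⊆ Iic p' :=
      bridge_subset_Iic hcomp hne hP le_rfl hmm hg'.2.2.1 hg'.1 le_rfl
    have hdle : Metric.diam (bridge C P mm p') ≤ p' - q :=
      diam_le_of_subset_Icc (fun z hz => ⟨hs1 hz, hs2 hz⟩) hle
    calc (1 - ε) * min (q - p) (q' - p') ≤ (1 - ε) * (q' - p') :=
          mul_le_mul_of_nonneg_left (min_le_right _ _) hε0
      _ ≤ _ := le_trans hd hdle

lemma eps_a2r {C : Set ℝ} (hcomp : IsCompact C) (hne : C.Nonempty) (hτ : 1 ≤ thickness C)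
    {p q : ℝ} (hg : OGap C p q) {ε : ℝ} (hε1 : 0 < ε) (hε2 : ε < 1) :
    (1 - ε) * (q - p) ≤ sSup C - q := by
  obtain ⟨P, hP, hrat⟩ := exists_pres hτ hε1 hε2
  obtain ⟨nn, hnn⟩ := hP.2.2 _ (isGap_of_OGap hcomp hg)
  have hd := diam_bridge_ge hnn hg.2.2.1 hε2
    (hrat nn q (frontier_mem_right hnn hg.2.2.1 hg.2.1))
  have hs1 : bridge C P nn q ⊆ Ici q :=
    bridge_subset_Ici hcomp hne hP le_rfl hnn hg.2.2.1 hg.2.1 le_rfl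
  have hqb : q ≤ sSup C := le_csSup hcomp.bddAbove hg.2.1
  have hdle : Metric.diam (bridge C P nn q) ≤ sSup C - q :=
    diam_le_of_subset_Icc (fun z hz => ⟨hs1 hz, (bridge_subset_hull hz).2⟩) hqb
  exact le_trans hd hdle

lemma eps_a2l {C : Set ℝ} (hcomp : IsCompact C) (hne : C.Nonempty) (hτ : 1 ≤ thickness C)
    {p q : ℝ} (hg : OGap C p q) {ε : ℝ} (hε1 : 0 < ε) (hε2 : ε < 1) :
    (1 - ε) * (q - p) ≤ p - sInf C := by
  obtain ⟨P, hP, hrat⟩ := exists_pres hτ hε1 hε2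
  obtain ⟨nn, hnn⟩ := hP.2.2 _ (isGap_of_OGap hcomp hg)
  have hd := diam_bridge_ge hnn hg.2.2.1 hε2
    (hrat nn p (frontier_mem_left hnn hg.2.2.1 hg.1))
  have hs1 : bridge C P nn p ⊆ Iic p :=
    bridge_subset_Iic hcomp hne hP le_rfl hnn hg.2.2.1 hg.1 le_rfl
  have hpa : sInf C ≤ p := csInf_le hcomp.bddBelow hg.1
  have hdle : Metric.diam (bridge C P nn p) ≤ p - sInf C :=
    diam_le_of_subset_Icc (fun z hz => ⟨(bridge_subset_hull hz).1, hs1 hz⟩) hpa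
  exact le_trans hd hdle

lemma le_of_eps {g d : ℝ} (hd : 0 ≤ d)
    (h : ∀ ε : ℝ, 0 < ε → ε < 1 → (1 - ε) * g ≤ d) : g ≤ d := by
  by_contra hc
  push_neg at hc
  have hg0 : 0 < g := lt_of_le_of_lt hd hc
  set ε := (g - d) / (2 * g) with hε
  have hε1 : 0 < ε := div_pos (by linarith) (by linarith)
  have hε2 : ε < 1 := by rw [div_lt_one (by linarith)]; linarith
  have heq : ε * g = (g - d) / 2 := by rw [hε]; field_simp
  have h2 := h ε hε1 hε2
  nlinarith [h2, heq]

lemma spread_of_thickness {C : Set ℝ} (hcomp : IsCompact C) (hne : C.Nonempty)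
    (hτ : 1 ≤ thickness C) : Spread C := by
  refine ⟨hcomp, hne, ?_, ?_, ?_⟩
  · intro p q p' q' hg hg' hle
    exact le_of_eps (by linarith) (fun ε hε1 hε2 => eps_a1 hcomp hne hτ hg hg' hle hε1 hε2)
  · intro p q hg
    have : sInf C ≤ p := csInf_le hcomp.bddBelow hg.1
    exact le_of_eps (by linarith) (fun ε hε1 hε2 => eps_a2l hcomp hne hτ hg hε1 hε2)
  · intro p q hg
    have : q ≤ sSup C := le_csSup hcomp.bddAbove hg.2.1
    exact le_of_eps (by linarith) (fun ε hε1 hε2 => eps_a2r hcomp hne hτ hg hε1 hε2)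

end LemmaA

lemma init {X Y : Set ℝ} (hX : Spread X) (hY : Spread Y)
    (hd : ∀ z, z ∈ X → z ∈ Y → False)
    (h1 : sInf Y ≤ sInf X) (h2 : sInf X ≤ sSup Y) :
    (∃ v1 v2, v1 ∈ Y ∧ v2 ∈ Y ∧ X ⊆ Ioo v1 v2) ∨ Linked Y X := by
  have haX : sInf X ∈ X := hX.comp.sInf_mem hX.nonem
  have haXY : sInf X ∉ Y := fun h => hd _ haX h
  have hYb : sInf Y < sInf X :=
    lt_of_le_of_ne h1 (fun h => haXY (h ▸ hY.comp.sInf_mem hY.nonem))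
  have hYt : sInf X < sSup Y :=
    lt_of_le_of_ne h2 (fun h => haXY (h.symm ▸ hY.comp.sSup_mem hY.nonem))
  obtain ⟨v1, v2, hV, hv1, hv2⟩ := gapAround hY.comp hY.nonem haXY hYb hYt
  rcases lt_or_ge (sSup X) v2 with hlt | hle
  · left
    exact ⟨v1, v2, hV.1, hV.2.1, fun x hx =>
      ⟨lt_of_lt_of_le hv1 (csInf_le hX.comp.bddBelow hx),
       lt_of_le_of_lt (le_csSup hX.comp.bddAbove hx) hlt⟩⟩
  · right
    have hv2X : v2 ∉ X := fun h => hd _ h hV.2.1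
    have hv2b : v2 < sSup X :=
      lt_of_le_of_ne hle (fun h => hv2X (h.symm ▸ hX.comp.sSup_mem hX.nonem))
    obtain ⟨u1, u2, hU, hu1, hu2⟩ := gapAround hX.comp hX.nonem hv2X hv2 hv2b
    exact ⟨v1, u1, v2, u2, hV, hU,
      lt_of_lt_of_le hv1 (csInf_le hX.comp.bddBelow hU.1), hu1, hu2⟩

lemma no_linked {δ : ℝ} (hδ : 0 < δ) {X Y : Set ℝ} (hX : Spread X) (hY : Spread Y)
    (hsep : ∀ x ∈ X, ∀ y ∈ Y, δ ≤ |x - y|) (hL : Linked X Y) : False := by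
  obtain ⟨p1, q1, p2, q2, hU, hV, h1, h2, h3⟩ := hL
  exact chase hδ _ X Y hX hY hsep p1 q1 p2 q2 hU hV h1 h2 h3 le_rfl

end SumsetAux

/-- If a Cantor set has thickness at least 1, then its sum set with itself is the
interval `[2a, 2b]`, where `[a, b]` is its convex hull. -/
theorem sumset_eq_interval_of_thickness_ge_one (C : Set ℝ) (hC : IsCantorSet C)
    (hτ : 1 ≤ thickness C) :
    C + C = Set.Icc (2 * sInf C) (2 * sSup C) := by
  obtain ⟨hne, hcomp, -, -⟩ := hC
  have hS : SumsetAux.Spread C := SumsetAux.spread_of_thickness hcomp hne hτ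
  apply Set.Subset.antisymm
  · intro z hz
    rw [Set.mem_add] at hz
    obtain ⟨x, hx, y, hy, rfl⟩ := hz
    constructor
    · have h1 := csInf_le hcomp.bddBelow hx
      have h2 := csInf_le hcomp.bddBelow hy
      linarith
    · have h1 := le_csSup hcomp.bddAbove hx
      have h2 := le_csSup hcomp.bddAbove hy
      linarith
  · intro t ht
    by_contra hts
    set D := SumsetAux.Nt t C with hD
    have hdisj : ∀ z, z ∈ C → z ∈ D → False := by
      intro z hz hzD
      apply hts
      rw [Set.mem_add]
      exact ⟨z, hz, t - z, SumsetAux.mem_Nt.mp hzD, by ring⟩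
    have hDcomp : IsCompact D := SumsetAux.Nt_compact hcomp
    have hDne : D.Nonempty := SumsetAux.Nt_nonempty hne
    obtain ⟨z0, hz0, hmin⟩ := (hcomp.prod hDcomp).exists_isMinOn (hne.prod hDne)
      (f := fun p : ℝ × ℝ => |p.1 - p.2|) (by fun_prop)
    set δ := |z0.1 - z0.2| with hδdef
    have hδ : 0 < δ := by
      rcases eq_or_lt_of_le (abs_nonneg (z0.1 - z0.2)) with h | h
      · exfalso
        have h0 : z0.1 - z0.2 = 0 := abs_eq_zero.mp h.symm
        have h0' : z0.1 = z0.2 := by linarith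
        exact hdisj z0.1 hz0.1 (h0' ▸ hz0.2)
      · exact h
    have hsep : ∀ x ∈ C, ∀ y ∈ D, δ ≤ |x - y| := fun x hx y hy =>
      hmin (Set.mk_mem_prod hx hy)
    have hsep' : ∀ x ∈ D, ∀ y ∈ C, δ ≤ |x - y| := fun x hx y hy =>
      abs_sub_comm y x ▸ hsep y hy x hx
    have hSD : SumsetAux.Spread D := SumsetAux.Spread_Nt hS
    have hDinf : sInf D = t - sSup C := SumsetAux.sInf_Nt hcomp hne
    have hDsup : sSup D = t - sInf C := SumsetAux.sSup_Nt hcomp hne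
    have haC : sInf C ∈ C := hcomp.sInf_mem hne
    have hbC : sSup C ∈ C := hcomp.sSup_mem hne
    rcases le_total (sInf D) (sInf C) with hcase | hcase
    · rcases SumsetAux.init hS hSD hdisj hcase
        (by rw [hDsup]; linarith [ht.1]) with ⟨v1, v2, hv1, hv2, hsub⟩ | hlink
      · have hc1 : t - v1 ∈ C := SumsetAux.mem_Nt.mp hv1
        have hc2 : t - v2 ∈ C := SumsetAux.mem_Nt.mp hv2
        have e1 : v1 < sInf C := (hsub haC).1
        have e2 : sSup C < v2 := (hsub hbC).2
        have e3 : sInf C ≤ t - v2 := csInf_le hcomp.bddBelow hc2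
        have e4 : t - v1 ≤ sSup C := le_csSup hcomp.bddAbove hc1
        linarith
      · exact SumsetAux.no_linked hδ hSD hS hsep' hlink
    · rcases SumsetAux.init hSD hS (fun z h1 h2 => hdisj z h2 h1) hcase
        (by rw [hDinf]; linarith [ht.2]) with ⟨v1, v2, hv1, hv2, hsub⟩ | hlink
      · have hd1 : t - v1 ∈ D := ⟨v1, hv1, rfl⟩
        have hd2 : t - v2 ∈ D := ⟨v2, hv2, rfl⟩
        have e1 : v1 < sInf D := (hsub (hDcomp.sInf_mem hDne)).1
        have e2 : sSup D < v2 := (hsub (hDcomp.sSup_mem hDne)).2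
        have e3 : sInf D ≤ t - v2 := csInf_le hDcomp.bddBelow hd2
        have e4 : t - v1 ≤ sSup D := le_csSup hDcomp.bddAbove hd1
        linarith
      · exact SumsetAux.no_linked hδ hS hSD hsep hlink
end
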